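/- arXiv:1711.01465 — 4 statements merged into one kernel-verified Lean document; each statement's English description precedes it below -/
import Mathlib

section
/- If H is a connected unbalanced graph, then γ(H) < 1/m(H), where m(H) = max over nonempty subgraphs H1 ⊆ H of |E(H1)|/|V(H1)| and γ(H) is the minimum of (|V(H)|-|V(H1)|)/(|E(H1)|(|V(H)|-1) - |E(H)|(|V(H1)|-1)) over proper subgraphs H1 of H for which the denominator is positive. -/
open Finset

/-- The denominator `|E(H1)|(|V(H)|-1) - |E(H)|(|V(H1)|-1)` (as a real number) appearing in
the definition of the exponent `γ(H)`. -/
noncomputable def jdenom {V : Type*} [Fintype V] (H : SimpleGraph V) (H1 : H.Subgraph) : ℝ :=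
  (H1.edgeSet.ncard : ℝ) * ((Fintype.card V : ℝ) - 1)
    - (H.edgeSet.ncard : ℝ) * ((H1.verts.ncard : ℝ) - 1)

/-- The value `(|V(H)|-|V(H1)|) / (|E(H1)|(|V(H)|-1) - |E(H)|(|V(H1)|-1))`. -/
noncomputable def jval {V : Type*} [Fintype V] (H : SimpleGraph V) (H1 : H.Subgraph) : ℝ :=
  ((Fintype.card V : ℝ) - (H1.verts.ncard : ℝ)) / jdenom H H1

/-- If `H` is a connected unbalanced graph, then `γ(H) < 1/m(H)`.  Here `Hm` is a nonempty
subgraph attaining the maximal edge-vertex ratio `m(H) = |E(Hm)|/|V(Hm)|`, the unbalancedness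
says `|E(Hm)|/|V(Hm)| > |E(H)|/|V(H)|`, and `γ` is the minimum of `jval` over proper subgraphs
with positive denominator. -/
theorem stmt4 {V : Type*} [Fintype V] (H : SimpleGraph V) (hconn : H.Connected)
    (Hm : H.Subgraph) (hmne : Hm.verts.Nonempty)
    (hmax : ∀ H2 : H.Subgraph, H2.verts.Nonempty →
      (H2.edgeSet.ncard : ℝ) * (Hm.verts.ncard : ℝ)
        ≤ (Hm.edgeSet.ncard : ℝ) * (H2.verts.ncard : ℝ))
    (hunb : (H.edgeSet.ncard : ℝ) * (Hm.verts.ncard : ℝ)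
        < (Hm.edgeSet.ncard : ℝ) * (Fintype.card V : ℝ))
    (γ : ℝ)
    (hγmem : ∃ H1 : H.Subgraph, H1 ≠ ⊤ ∧ 0 < jdenom H H1 ∧ γ = jval H H1)
    (hγmin : ∀ H2 : H.Subgraph, H2 ≠ ⊤ → 0 < jdenom H H2 → γ ≤ jval H H2) :
    γ < (Hm.verts.ncard : ℝ) / (Hm.edgeSet.ncard : ℝ) := by
  classical
  -- Hm is a proper subgraph
  have hmtop : Hm ≠ ⊤ := by
    rintro rfl
    simp only [SimpleGraph.Subgraph.edgeSet_top, SimpleGraph.Subgraph.verts_top,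
      Set.ncard_univ, Nat.card_eq_fintype_card] at hunb
    exact lt_irrefl _ hunb
  have he1pos : (0:ℝ) < (Hm.edgeSet.ncard : ℝ) := by
    by_contra h
    push_neg at h
    have h0 : (Hm.edgeSet.ncard : ℝ) = 0 := le_antisymm h (by positivity)
    rw [h0, zero_mul] at hunb
    nlinarith [mul_nonneg (Nat.cast_nonneg H.edgeSet.ncard : (0:ℝ) ≤ _)
      (Nat.cast_nonneg Hm.verts.ncard : (0:ℝ) ≤ _)]
  -- Hm has an edge, hence at least 2 vertices
  have hene : Hm.edgeSet.Nonempty := by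
    rw [Set.nonempty_iff_ne_empty]
    intro h
    rw [h, Set.ncard_empty] at he1pos
    simp at he1pos
  have hv2 : (2:ℝ) ≤ (Hm.verts.ncard : ℝ) := by
    obtain ⟨ed, hed⟩ := hene
    induction ed with
    | h a b =>
      rw [SimpleGraph.Subgraph.mem_edgeSet] at hed
      have hab : a ≠ b := hed.ne
      have ha : a ∈ Hm.verts := hed.fst_mem
      have hb : b ∈ Hm.verts := hed.snd_mem
      have hnt : Hm.verts.Nontrivial := ⟨a, ha, b, hb, hab⟩
      have : 1 < Hm.verts.ncard :=
        (Set.one_lt_ncard Hm.verts.toFinite).mpr ⟨a, ha, b, hb, hab⟩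
      exact_mod_cast this
  -- subgraph has no more edges than H
  have hE : (Hm.edgeSet.ncard : ℝ) ≤ (H.edgeSet.ncard : ℝ) := by
    exact_mod_cast Set.ncard_le_ncard Hm.edgeSet_subset H.edgeSet.toFinite
  have hdpos : 0 < jdenom H Hm := by
    unfold jdenom
    nlinarith
  have hγ : γ ≤ jval H Hm := hγmin Hm hmtop hdpos
  have hlt : jval H Hm < (Hm.verts.ncard : ℝ) / (Hm.edgeSet.ncard : ℝ) := by
    rw [jval, div_lt_div_iff₀ hdpos he1pos]
    unfold jdenom
    nlinarith [mul_pos (show (0:ℝ) < (Hm.verts.ncard : ℝ) - 1 by linarith)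
      (show (0:ℝ) < (Hm.edgeSet.ncard : ℝ) * (Fintype.card V : ℝ)
        - (H.edgeSet.ncard : ℝ) * (Hm.verts.ncard : ℝ) by linarith)]
  linarith
end

section
/- Let G_n be a sequence of graphs colored uniformly with c_n colors, with c_n → ∞, and suppose E[T(K_{1,r}, G_n)] → ∞. Then Var(T(K_{1,r}, G_n)) = o( (E[T(K_{1,r}, G_n)])^2 ), and consequently T(K_{1,r}, G_n) / E[T(K_{1,r}, G_n)] → 1 in probability; in particular T(K_{1,r}, G_n) → ∞ in probability. -/
open Finset Filter

/-- The star graph `K_{1,r}` : one center (vertex `0`) joined to `r` leaves. -/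
def starGraph (r : ℕ) : SimpleGraph (Fin (r + 1)) :=
  SimpleGraph.fromRel (fun i _ => i = 0)

/-- Number of monochromatic copies of `F` in `G` under the coloring `f`. -/
noncomputable def monoCopyCount {α : Type*} (F : SimpleGraph α) {V : Type*} (G : SimpleGraph V)
    {c : ℕ} (f : V → Fin c) : ℕ :=
  Nat.card {A : G.Subgraph //
    Nonempty (A.coe ≃g F) ∧ ∀ u ∈ A.verts, ∀ v ∈ A.verts, f u = f v}

/-- Expected number of monochromatic copies of `F` in `G` in a uniform `c`-coloring. -/
noncomputable def meanMono {α : Type*} (F : SimpleGraph α) {V : Type*} [Fintype V]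
    [DecidableEq V] (G : SimpleGraph V) (c : ℕ) : ℝ :=
  (∑ f : V → Fin c, (monoCopyCount F G f : ℝ)) / (c : ℝ) ^ Fintype.card V

/-- Variance of the number of monochromatic copies of `F` in `G` in a uniform `c`-coloring. -/
noncomputable def varMono {α : Type*} (F : SimpleGraph α) {V : Type*} [Fintype V]
    [DecidableEq V] (G : SimpleGraph V) (c : ℕ) : ℝ :=
  (∑ f : V → Fin c, ((monoCopyCount F G f : ℝ) - meanMono F G c) ^ 2) /
    (c : ℝ) ^ Fintype.card V

/-! ### Auxiliary development -/

attribute [local instance] Classical.propDecidable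

noncomputable instance subgraphFintype {V : Type*} [Fintype V] (G : SimpleGraph V) :
    Fintype G.Subgraph := by
  have : Finite G.Subgraph := by
    have : Function.Injective (fun A : G.Subgraph => (A.verts, A.Adj)) := by
      intro A B h
      simp only [Prod.mk.injEq] at h
      exact SimpleGraph.Subgraph.ext h.1 h.2
    exact Finite.of_injective _ this
  exact Fintype.ofFinite _

lemma starGraph_adj (r : ℕ) (i j : Fin (r+1)) :
    (starGraph r).Adj i j ↔ i ≠ j ∧ (i = 0 ∨ j = 0) := by
  simp [starGraph, SimpleGraph.fromRel_adj, eq_comm]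

section Star

variable {V : Type*} [Fintype V] [DecidableEq V] {G : SimpleGraph V} {r : ℕ}

/-- `A` is a star with center `w` and leaf set `L`. -/
def IsStarOn (r : ℕ) {V : Type*} [DecidableEq V] {G : SimpleGraph V} (A : G.Subgraph) (w : V)
    (L : Finset V) : Prop :=
  w ∉ L ∧ L.card = r ∧ A.verts = ↑(insert w L) ∧
    ∀ x y : V, A.Adj x y ↔ ((x = w ∧ y ∈ L) ∨ (y = w ∧ x ∈ L))

lemma isStarOn_unique {A B : G.Subgraph} {w : V} {L L' : Finset V} (hA : IsStarOn r A w L)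
    (hB : IsStarOn r B w L') (hv : A.verts = B.verts) : A = B := by
  obtain ⟨hw, -, hvA, hadjA⟩ := hA
  obtain ⟨hw', -, hvB, hadjB⟩ := hB
  have hins : (insert w L : Finset V) = insert w L' :=
    Finset.coe_injective (hvA.symm.trans (hv.trans hvB))
  have hLL : L = L' := by
    rw [← Finset.erase_insert hw, ← Finset.erase_insert hw', hins]
  ext x y
  · rw [hv]
  · rw [hadjA, hadjB, hLL]

lemma bridge {A : G.Subgraph} {w : V} {L : Finset V} (h : IsStarOn r A w L) {x y : V}
    (hx : x ∈ A.verts) (hy : y ∈ A.verts) :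
    A.Adj x y ↔ (x ≠ y ∧ (x = w ∨ y = w)) := by
  obtain ⟨hw, -, hv, hadj⟩ := h
  have hmem : ∀ z : V, z ∈ A.verts → z = w ∨ z ∈ L := by
    intro z hz
    rw [hv] at hz
    simpa using hz
  rw [hadj]
  constructor
  · rintro (⟨hxw, hyL⟩ | ⟨hyw, hxL⟩)
    · exact ⟨by rintro rfl; rw [hxw] at hyL; exact hw hyL, Or.inl hxw⟩
    · exact ⟨by rintro rfl; rw [hyw] at hxL; exact hw hxL, Or.inr hyw⟩
  · rintro ⟨hne, hxw | hyw⟩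
    · rcases hmem y hy with rfl | hyL
      · exact absurd hxw hne
      · exact Or.inl ⟨hxw, hyL⟩
    · rcases hmem x hx with rfl | hxL
      · exact absurd hyw.symm hne
      · exact Or.inr ⟨hyw, hxL⟩

lemma isStar_iff_exists {A : G.Subgraph} :
    Nonempty (A.coe ≃g starGraph r) ↔ ∃ w L, IsStarOn r A w L := by
  constructor
  · rintro ⟨φ⟩
    set w : V := ((φ.symm 0 : A.verts) : V) with hwdef
    have hwmem : w ∈ A.verts := (φ.symm 0).2
    have hzero : ∀ x : A.verts, φ x = 0 ↔ (x : V) = w := by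
      intro x
      constructor
      · intro h
        have : x = φ.symm 0 := by rw [← h]; simp
        rw [this]
      · intro h
        have hx : x = φ.symm 0 := Subtype.ext h
        rw [hx]; simp
    have key : ∀ x y : A.verts, A.Adj x y ↔ ((x : V) ≠ y ∧ ((x : V) = w ∨ (y : V) = w)) := by
      intro x y
      rw [← SimpleGraph.Subgraph.coe_adj, ← φ.map_adj_iff, starGraph_adj]
      constructor
      · rintro ⟨hne, h0⟩
        refine ⟨fun h => hne (congrArg φ (Subtype.ext h)), h0.imp (hzero x).1 (hzero y).1⟩
      · rintro ⟨hne, h0⟩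
        refine ⟨fun h => hne (congrArg Subtype.val (φ.toEquiv.injective h)),
          h0.imp (hzero x).2 (hzero y).2⟩
    have hcard : A.verts.toFinset.card = r + 1 := by
      rw [Set.toFinset_card]
      have := Fintype.card_congr φ.toEquiv
      rw [this, Fintype.card_fin]
    refine ⟨w, A.verts.toFinset.erase w, Finset.notMem_erase _ _, ?_, ?_, ?_⟩
    · rw [Finset.card_erase_of_mem (Set.mem_toFinset.2 hwmem), hcard]; omega
    · have : insert w (A.verts.toFinset.erase w) = A.verts.toFinset :=
        Finset.insert_erase (Set.mem_toFinset.2 hwmem)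
      rw [this, Set.coe_toFinset]
    · intro x y
      constructor
      · intro hxy
        have hx : x ∈ A.verts := A.edge_vert hxy
        have hy : y ∈ A.verts := A.edge_vert hxy.symm
        rcases (key ⟨x, hx⟩ ⟨y, hy⟩).1 hxy with ⟨hne, hxw | hyw⟩
        · exact Or.inl ⟨hxw, Finset.mem_erase.2 ⟨by rw [← hxw]; exact hne.symm,
            Set.mem_toFinset.2 hy⟩⟩
        · exact Or.inr ⟨hyw, Finset.mem_erase.2 ⟨by rw [← hyw]; exact hne,
            Set.mem_toFinset.2 hx⟩⟩
      · rintro (⟨hxw, hy⟩ | ⟨hyw, hx⟩)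
        · obtain ⟨hyne, hymem⟩ := Finset.mem_erase.1 hy
          exact (key ⟨x, hxw ▸ hwmem⟩ ⟨y, Set.mem_toFinset.1 hymem⟩).2
            ⟨show x ≠ y from fun h => hyne (by rw [← h]; exact hxw), Or.inl hxw⟩
        · obtain ⟨hxne, hxmem⟩ := Finset.mem_erase.1 hx
          exact (key ⟨x, Set.mem_toFinset.1 hxmem⟩ ⟨y, hyw ▸ hwmem⟩).2
            ⟨show x ≠ y from fun h => hxne (by rw [h]; exact hyw), Or.inr hyw⟩
  · rintro ⟨w, L, hstar⟩
    obtain ⟨hw, hL, hv, hadj⟩ := hstar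
    have hScard : (insert w L).card = r + 1 := by rw [Finset.card_insert_of_notMem hw, hL]
    let e0 : {x // x ∈ insert w L} ≃ Fin (r + 1) := Finset.equivFinOfCardEq hScard
    let e1 : A.verts ≃ {x // x ∈ insert w L} :=
      { toFun := fun x => ⟨x.1, Finset.mem_coe.1 (hv.le x.2)⟩
        invFun := fun x => ⟨x.1, hv.ge (Finset.mem_coe.2 x.2)⟩
        left_inv := fun x => rfl
        right_inv := fun x => rfl }
    let a0 : Fin (r + 1) := e0 ⟨w, Finset.mem_insert_self _ _⟩
    let e : A.verts ≃ Fin (r + 1) := (e1.trans e0).trans (Equiv.swap a0 0)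
    have hzero : ∀ x : A.verts, e x = 0 ↔ (x : V) = w := by
      intro x
      show Equiv.swap a0 0 (e0 (e1 x)) = 0 ↔ _
      rw [Equiv.apply_eq_iff_eq_symm_apply, Equiv.symm_swap, Equiv.swap_apply_right,
        e0.apply_eq_iff_eq]
      constructor
      · intro h; exact congrArg Subtype.val h
      · intro h; exact Subtype.ext h
    refine ⟨⟨e, ?_⟩⟩
    intro x y
    rw [starGraph_adj]
    have hb := bridge (r := r) ⟨hw, hL, hv, hadj⟩ x.2 y.2
    rw [SimpleGraph.Subgraph.coe_adj, hb]
    constructor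
    · rintro ⟨hne, h0⟩
      refine ⟨fun h => hne (congrArg e (Subtype.ext h)), h0.imp (hzero x).1 (hzero y).1⟩
    · rintro ⟨hne, h0⟩
      refine ⟨fun h => hne (congrArg Subtype.val (e.injective h)),
        h0.imp (hzero x).2 (hzero y).2⟩

end Star

section Count

variable {W : Type*} [Fintype W] [DecidableEq W]

lemma card_cylinder (c : ℕ) (S : Finset W) (g0 : W → Fin c) :
    (univ.filter fun f : W → Fin c => ∀ v ∈ S, f v = g0 v).card
      = c ^ (Fintype.card W - S.card) := by
  have e : {f : W → Fin c // ∀ v ∈ S, f v = g0 v} ≃ ({v : W // v ∉ S} → Fin c) :=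
    { toFun := fun f v => f.1 v.1
      invFun := fun g => ⟨fun v => if h : v ∈ S then g0 v else g ⟨v, h⟩, by
        intro v hv; simp [hv]⟩
      left_inv := by
        rintro ⟨f, hf⟩
        ext v
        by_cases h : v ∈ S <;> simp [h, hf]
      right_inv := by
        intro g
        ext v
        simp [v.2] }
  have h1 : (univ.filter fun f : W → Fin c => ∀ v ∈ S, f v = g0 v).card
      = Fintype.card {f : W → Fin c // ∀ v ∈ S, f v = g0 v} := by
    rw [Fintype.card_subtype]
  rw [h1, Fintype.card_congr e, Fintype.card_fun, Fintype.card_fin]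
  congr 1
  rw [Fintype.card_subtype_compl, Fintype.card_coe]

/-- number of colorings constant on a nonempty set `S` -/
lemma card_constOn (c : ℕ) (S : Finset W) (hS : S.Nonempty) :
    (univ.filter fun f : W → Fin c => ∀ u ∈ S, ∀ v ∈ S, f u = f v).card
      = c * c ^ (Fintype.card W - S.card) := by
  obtain ⟨s0, hs0⟩ := hS
  have hsplit : (univ.filter fun f : W → Fin c => ∀ u ∈ S, ∀ v ∈ S, f u = f v)
      = (univ : Finset (Fin c)).biUnion
          (fun a => univ.filter fun f : W → Fin c => ∀ v ∈ S, f v = a) := by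
    ext f
    simp only [Finset.mem_filter, Finset.mem_biUnion, Finset.mem_univ, true_and]
    constructor
    · intro h
      exact ⟨f s0, fun v hv => h v hv s0 hs0⟩
    · rintro ⟨a, ha⟩ u hu v hv
      rw [ha u hu, ha v hv]
  rw [hsplit, Finset.card_biUnion]
  · simp only [card_cylinder]
    rw [Finset.sum_const, Finset.card_univ, Fintype.card_fin, smul_eq_mul]
  · intro a _ b _ hab
    rw [Function.onFun, Finset.disjoint_left]
    intro f hfa hfb
    simp only [Finset.mem_filter] at hfa hfb
    exact hab ((hfa.2 s0 hs0).symm.trans (hfb.2 s0 hs0))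

/-- number of colorings constant on each of two disjoint nonempty sets -/
lemma card_constOn_two (c : ℕ) (S T : Finset W) (hS : S.Nonempty) (hT : T.Nonempty)
    (hd : Disjoint S T) :
    (univ.filter fun f : W → Fin c =>
        (∀ u ∈ S, ∀ v ∈ S, f u = f v) ∧ (∀ u ∈ T, ∀ v ∈ T, f u = f v)).card
      = c ^ 2 * c ^ (Fintype.card W - S.card - T.card) := by
  obtain ⟨s0, hs0⟩ := hS
  obtain ⟨t0, ht0⟩ := hT
  have hsplit : (univ.filter fun f : W → Fin c =>
        (∀ u ∈ S, ∀ v ∈ S, f u = f v) ∧ (∀ u ∈ T, ∀ v ∈ T, f u = f v))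
      = (univ : Finset (Fin c × Fin c)).biUnion
          (fun p => univ.filter fun f : W → Fin c =>
            ∀ v ∈ S ∪ T, f v = (fun v => if v ∈ S then p.1 else p.2) v) := by
    ext f
    simp only [Finset.mem_filter, Finset.mem_biUnion, Finset.mem_univ, true_and]
    constructor
    · rintro ⟨h1, h2⟩
      refine ⟨(f s0, f t0), fun v hv => ?_⟩
      by_cases hvS : v ∈ S
      · simp only [hvS, if_true]
        exact h1 v hvS s0 hs0
      · simp only [hvS, if_false]
        rcases Finset.mem_union.1 hv with h | h
        · exact absurd h hvS
        · exact h2 v h t0 ht0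
    · rintro ⟨p, hp⟩
      constructor
      · intro u hu v hv
        rw [hp u (Finset.mem_union_left _ hu), hp v (Finset.mem_union_left _ hv)]
        simp [hu, hv]
      · intro u hu v hv
        have hunS : u ∉ S := fun h => (Finset.disjoint_left.1 hd h) hu
        have hvnS : v ∉ S := fun h => (Finset.disjoint_left.1 hd h) hv
        rw [hp u (Finset.mem_union_right _ hu), hp v (Finset.mem_union_right _ hv)]
        simp [hunS, hvnS]
  rw [hsplit, Finset.card_biUnion]
  · simp only [card_cylinder]
    rw [Finset.sum_const, Finset.card_univ, Fintype.card_prod, Fintype.card_fin, smul_eq_mul]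
    congr 1
    · rw [sq]
    · congr 1
      rw [Finset.card_union_of_disjoint hd]
      omega
  · intro p _ q _ hpq
    rw [Function.onFun, Finset.disjoint_left]
    intro f hfp hfq
    simp only [Finset.mem_filter] at hfp hfq
    apply hpq
    have h1 := (hfp.2 s0 (Finset.mem_union_left _ hs0)).symm.trans
      (hfq.2 s0 (Finset.mem_union_left _ hs0))
    have h2 := (hfp.2 t0 (Finset.mem_union_right _ ht0)).symm.trans
      (hfq.2 t0 (Finset.mem_union_right _ ht0))
    simp only [hs0, if_true] at h1
    have ht0S : t0 ∉ S := fun h => (Finset.disjoint_left.1 hd h) ht0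
    simp only [ht0S, if_false] at h2
    exact Prod.ext h1 h2

/-- constancy on two intersecting sets is constancy on the union -/
lemma constOn_union (S T : Finset W) (h : (S ∩ T).Nonempty) (f : W → Fin c) :
    ((∀ u ∈ S, ∀ v ∈ S, f u = f v) ∧ (∀ u ∈ T, ∀ v ∈ T, f u = f v))
      ↔ (∀ u ∈ S ∪ T, ∀ v ∈ S ∪ T, f u = f v) := by
  obtain ⟨z, hz⟩ := h
  have hzS := Finset.mem_inter.1 hz |>.1
  have hzT := Finset.mem_inter.1 hz |>.2
  constructor
  · rintro ⟨h1, h2⟩ u hu v hv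
    have key : ∀ x ∈ S ∪ T, f x = f z := by
      intro x hx
      rcases Finset.mem_union.1 hx with h | h
      · exact h1 x h z hzS
      · exact h2 x h z hzT
    rw [key u hu, key v hv]
  · intro h
    exact ⟨fun u hu v hv => h u (Finset.mem_union_left _ hu) v (Finset.mem_union_left _ hv),
      fun u hu v hv => h u (Finset.mem_union_right _ hu) v (Finset.mem_union_right _ hv)⟩

end Count

section Main

variable {V : Type*} [Fintype V] [DecidableEq V]

/-- The finset of star subgraphs. -/
noncomputable def stars (r : ℕ) (G : SimpleGraph V) : Finset G.Subgraph :=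
  univ.filter (fun A => Nonempty (A.coe ≃g starGraph r))

lemma mem_stars {r : ℕ} {G : SimpleGraph V} {A : G.Subgraph} :
    A ∈ stars r G ↔ ∃ w L, IsStarOn r A w L := by
  rw [stars, Finset.mem_filter]
  simp [isStar_iff_exists]

lemma stars_verts_card {r : ℕ} {G : SimpleGraph V} {A : G.Subgraph} (hA : A ∈ stars r G) :
    A.verts.toFinset.card = r + 1 := by
  obtain ⟨w, L, hw, hL, hv, -⟩ := mem_stars.1 hA
  rw [hv]
  rw [Finset.toFinset_coe, Finset.card_insert_of_notMem hw, hL]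

/-- a chosen center of a subgraph (junk value if not a star) -/
noncomputable def center (r : ℕ) {G : SimpleGraph V} [Nonempty V] (A : G.Subgraph) : V :=
  if h : ∃ w L, IsStarOn r A w L then h.choose else Classical.arbitrary V

lemma center_spec {r : ℕ} {G : SimpleGraph V} [Nonempty V] {A : G.Subgraph}
    (h : ∃ w L, IsStarOn r A w L) : ∃ L, IsStarOn r A (center r A) L := by
  rw [center, dif_pos h]
  exact h.choose_spec

lemma isStarOn_center_mem {r : ℕ} {G : SimpleGraph V} {A : G.Subgraph} {w : V} {L : Finset V}
    (h : IsStarOn r A w L) : w ∈ A.verts.toFinset := by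
  obtain ⟨-, -, hv, -⟩ := h
  rw [hv, Finset.toFinset_coe]
  exact Finset.mem_insert_self _ _

lemma isStarOn_adj {r : ℕ} {G : SimpleGraph V} {A : G.Subgraph} {w : V} {L : Finset V}
    (h : IsStarOn r A w L) {x : V} (hx : x ∈ A.verts.toFinset) (hne : x ≠ w) : G.Adj w x := by
  obtain ⟨hw, -, hv, hadj⟩ := h
  rw [hv, Finset.toFinset_coe, Finset.mem_insert] at hx
  rcases hx with rfl | hxL
  · exact absurd rfl hne
  · exact SimpleGraph.Subgraph.adj_sub A ((hadj w x).2 (Or.inl ⟨rfl, hxL⟩))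

lemma card_containing (r t : ℕ) (G : SimpleGraph V) (U : Finset V) (hU : U.Nonempty)
    (hUcard : U.card = t) (ht : t ≤ r + 1) :
    ((stars r G).filter fun B => U ⊆ B.verts.toFinset).card
      ≤ (t + 1) * G.maxDegree ^ (r + 1 - t) := by
  obtain ⟨u0, hu0⟩ := hU
  haveI : Nonempty V := ⟨u0⟩
  set Δ := G.maxDegree with hΔ
  set P : Finset G.Subgraph := (stars r G).filter (fun B => U ⊆ B.verts.toFinset) with hP
  -- basic facts about members of P
  have hstarB : ∀ B ∈ P, ∃ L, IsStarOn r B (center r B) L := by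
    intro B hB
    exact center_spec (mem_stars.1 (Finset.mem_filter.1 hB).1)
  have hdeg : ∀ w : V, G.degree w ≤ Δ := fun w => G.degree_le_maxDegree w
  -- split by whether the center is in U
  have hsplit := Finset.card_filter_add_card_filter_not
    (s := P) (p := fun B => center r B ∈ U)
  -- Part 1 : center in U
  have h1 : (P.filter fun B => center r B ∈ U).card ≤ t * Δ ^ (r + 1 - t) := by
    rw [Finset.card_eq_sum_card_fiberwise
      (f := fun B => center r B) (t := U) (s := P.filter fun B => center r B ∈ U)
      (fun B hB => (Finset.mem_filter.1 hB).2)]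
    have hfib : ∀ w ∈ U,
        ((P.filter fun B => center r B ∈ U).filter fun B => center r B = w).card
          ≤ Δ ^ (r + 1 - t) := by
      intro w hw
      have hinj : ∀ B ∈ (P.filter fun B => center r B ∈ U).filter fun B => center r B = w,
          B.verts.toFinset \ U ∈ (G.neighborFinset w).powersetCard (r + 1 - t) := by
        intro B hB
        obtain ⟨hBmem, hcw⟩ := Finset.mem_filter.1 hB
        obtain ⟨hBP, -⟩ := Finset.mem_filter.1 hBmem
        obtain ⟨hBs, hUB⟩ := Finset.mem_filter.1 hBP
        obtain ⟨L, hL⟩ := hstarB B hBP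
        rw [Finset.mem_powersetCard]
        constructor
        · intro x hx
          obtain ⟨hxB, hxU⟩ := Finset.mem_sdiff.1 hx
          rw [SimpleGraph.mem_neighborFinset]
          have hxw : x ≠ w := by rintro rfl; exact hxU (hcw ▸ hw)
          exact hcw ▸ isStarOn_adj hL hxB (by rw [hcw]; exact hxw)
        · rw [Finset.card_sdiff_of_subset hUB, stars_verts_card hBs, hUcard]
      calc ((P.filter fun B => center r B ∈ U).filter fun B => center r B = w).card
          ≤ ((G.neighborFinset w).powersetCard (r + 1 - t)).card := by
            apply Finset.card_le_card_of_injOn _ hinj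
            intro B hB B' hB' heq
            obtain ⟨hBmem, hcw⟩ := Finset.mem_filter.1 hB
            obtain ⟨hBP, -⟩ := Finset.mem_filter.1 hBmem
            obtain ⟨hBmem', hcw'⟩ := Finset.mem_filter.1 hB'
            obtain ⟨hBP', -⟩ := Finset.mem_filter.1 hBmem'
            obtain ⟨L, hL⟩ := hstarB B hBP
            obtain ⟨L', hL'⟩ := hstarB B' hBP'
            have hUB := (Finset.mem_filter.1 hBP).2
            have hUB' := (Finset.mem_filter.1 hBP').2
            have heq' : B.verts.toFinset \ U = B'.verts.toFinset \ U := heq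
            have hverts : B.verts.toFinset = B'.verts.toFinset := by
              rw [← Finset.sdiff_union_of_subset hUB, ← Finset.sdiff_union_of_subset hUB', heq']
            refine isStarOn_unique (hcw ▸ hL) (hcw' ▸ hL') ?_
            rw [← Set.coe_toFinset B.verts, ← Set.coe_toFinset B'.verts, hverts]
        _ ≤ Δ ^ (r + 1 - t) := by
            rw [Finset.card_powersetCard, SimpleGraph.card_neighborFinset_eq_degree]
            exact le_trans (Nat.choose_le_pow _ _) (Nat.pow_le_pow_left (hdeg w) _)
    calc ∑ w ∈ U, ((P.filter fun B => center r B ∈ U).filter fun B => center r B = w).card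
        ≤ ∑ _w ∈ U, Δ ^ (r + 1 - t) := Finset.sum_le_sum hfib
      _ = t * Δ ^ (r + 1 - t) := by rw [Finset.sum_const, hUcard, smul_eq_mul]
  -- Part 2 : center not in U
  have h2 : (P.filter fun B => ¬ center r B ∈ U).card ≤ Δ ^ (r + 1 - t) := by
    rcases Nat.lt_or_ge r t with hrt | htr
    · -- t = r + 1 : impossible to have the center outside U
      have : (P.filter fun B => ¬ center r B ∈ U) = ∅ := by
        rw [Finset.filter_eq_empty_iff]
        intro B hB hcB
        obtain ⟨hBs, hUB⟩ := Finset.mem_filter.1 hB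
        obtain ⟨L, hL⟩ := hstarB B hB
        have hteq : t = r + 1 := le_antisymm ht hrt
        have : U = B.verts.toFinset :=
          Finset.eq_of_subset_of_card_le hUB (by rw [stars_verts_card hBs, hUcard, hteq])
        exact hcB (this ▸ isStarOn_center_mem hL)
      rw [this]
      simp
    · -- t ≤ r
      have hmapsto : ∀ B ∈ (P.filter fun B => ¬ center r B ∈ U),
          center r B ∈ G.neighborFinset u0 := by
        intro B hB
        obtain ⟨hBP, hcB⟩ := Finset.mem_filter.1 hB
        obtain ⟨hBs, hUB⟩ := Finset.mem_filter.1 hBP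
        obtain ⟨L, hL⟩ := hstarB B hBP
        rw [SimpleGraph.mem_neighborFinset]
        exact (isStarOn_adj hL (hUB hu0) (by rintro rfl; exact hcB hu0)).symm
      rw [Finset.card_eq_sum_card_fiberwise hmapsto]
      have hfib : ∀ w ∈ G.neighborFinset u0,
          ((P.filter fun B => ¬ center r B ∈ U).filter fun B => center r B = w).card
            ≤ Δ ^ (r - t) := by
        intro w hw
        have hinj : ∀ B ∈ (P.filter fun B => ¬ center r B ∈ U).filter
              fun B => center r B = w,
            B.verts.toFinset \ insert w U ∈ (G.neighborFinset w).powersetCard (r - t) := by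
          intro B hB
          obtain ⟨hBmem, hcw⟩ := Finset.mem_filter.1 hB
          obtain ⟨hBP, hcB⟩ := Finset.mem_filter.1 hBmem
          obtain ⟨hBs, hUB⟩ := Finset.mem_filter.1 hBP
          obtain ⟨L, hL⟩ := hstarB B hBP
          have hwU : w ∉ U := hcw ▸ hcB
          have hins : insert w U ⊆ B.verts.toFinset := by
            rw [Finset.insert_subset_iff]
            exact ⟨hcw ▸ isStarOn_center_mem hL, hUB⟩
          rw [Finset.mem_powersetCard]
          constructor
          · intro x hx
            obtain ⟨hxB, hxU⟩ := Finset.mem_sdiff.1 hx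
            rw [Finset.mem_insert, not_or] at hxU
            rw [SimpleGraph.mem_neighborFinset]
            exact hcw ▸ isStarOn_adj hL hxB (by rw [hcw]; exact hxU.1)
          · rw [Finset.card_sdiff_of_subset hins, stars_verts_card hBs,
              Finset.card_insert_of_notMem hwU, hUcard]
            omega
        calc ((P.filter fun B => ¬ center r B ∈ U).filter fun B => center r B = w).card
            ≤ ((G.neighborFinset w).powersetCard (r - t)).card := by
              apply Finset.card_le_card_of_injOn _ hinj
              intro B hB B' hB' heq
              obtain ⟨hBmem, hcw⟩ := Finset.mem_filter.1 hB
              obtain ⟨hBP, hcB⟩ := Finset.mem_filter.1 hBmem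
              obtain ⟨hBmem', hcw'⟩ := Finset.mem_filter.1 hB'
              obtain ⟨hBP', hcB'⟩ := Finset.mem_filter.1 hBmem'
              obtain ⟨L, hL⟩ := hstarB B hBP
              obtain ⟨L', hL'⟩ := hstarB B' hBP'
              have hUB := (Finset.mem_filter.1 hBP).2
              have hUB' := (Finset.mem_filter.1 hBP').2
              have hins : insert w U ⊆ B.verts.toFinset := by
                rw [Finset.insert_subset_iff]
                exact ⟨hcw ▸ isStarOn_center_mem hL, hUB⟩
              have hins' : insert w U ⊆ B'.verts.toFinset := by
                rw [Finset.insert_subset_iff]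
                exact ⟨hcw' ▸ isStarOn_center_mem hL', hUB'⟩
              have heq' : B.verts.toFinset \ insert w U = B'.verts.toFinset \ insert w U := heq
              have hverts : B.verts.toFinset = B'.verts.toFinset := by
                rw [← Finset.sdiff_union_of_subset hins, ← Finset.sdiff_union_of_subset hins',
                  heq']
              refine isStarOn_unique (hcw ▸ hL) (hcw' ▸ hL') ?_
              rw [← Set.coe_toFinset B.verts, ← Set.coe_toFinset B'.verts, hverts]
          _ ≤ Δ ^ (r - t) := by
              rw [Finset.card_powersetCard, SimpleGraph.card_neighborFinset_eq_degree]
              exact le_trans (Nat.choose_le_pow _ _) (Nat.pow_le_pow_left (hdeg w) _)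
      calc ∑ w ∈ G.neighborFinset u0,
            ((P.filter fun B => ¬ center r B ∈ U).filter fun B => center r B = w).card
          ≤ ∑ _w ∈ G.neighborFinset u0, Δ ^ (r - t) := Finset.sum_le_sum hfib
        _ = G.degree u0 * Δ ^ (r - t) := by
            rw [Finset.sum_const, SimpleGraph.card_neighborFinset_eq_degree, smul_eq_mul]
        _ ≤ Δ * Δ ^ (r - t) := Nat.mul_le_mul_right _ (hdeg u0)
        _ = Δ ^ (r + 1 - t) := by
            rw [← pow_succ']
            congr 1
            omega
  calc P.card = _ + _ := hsplit.symm
    _ ≤ t * Δ ^ (r + 1 - t) + Δ ^ (r + 1 - t) := Nat.add_le_add h1 h2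
    _ = (t + 1) * Δ ^ (r + 1 - t) := by ring

end Main

section Main2

variable {V : Type*} [Fintype V] [DecidableEq V]

lemma card_pairs (r t : ℕ) (G : SimpleGraph V) (ht1 : 1 ≤ t) (ht : t ≤ r + 1) :
    (((stars r G) ×ˢ (stars r G)).filter fun p =>
        (p.1.verts.toFinset ∩ p.2.verts.toFinset).card = t).card
      ≤ (stars r G).card * ((r + 1).choose t * ((t + 1) * G.maxDegree ^ (r + 1 - t))) := by
  set Q := ((stars r G) ×ˢ (stars r G)).filter fun p =>
      (p.1.verts.toFinset ∩ p.2.verts.toFinset).card = t with hQ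
  have hmapsto : ∀ p ∈ Q, p.1 ∈ stars r G := by
    intro p hp
    exact (Finset.mem_product.1 (Finset.mem_filter.1 hp).1).1
  rw [Finset.card_eq_sum_card_fiberwise hmapsto]
  have hfib : ∀ A ∈ stars r G, (Q.filter fun p => p.1 = A).card
      ≤ (r + 1).choose t * ((t + 1) * G.maxDegree ^ (r + 1 - t)) := by
    intro A hA
    have hinj : (Q.filter fun p => p.1 = A).card
        ≤ ((stars r G).filter fun B => (A.verts.toFinset ∩ B.verts.toFinset).card = t).card := by
      apply Finset.card_le_card_of_injOn (fun p => p.2)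
      · intro p hp
        obtain ⟨hpQ, hp1⟩ := Finset.mem_filter.1 hp
        obtain ⟨hprod, hcard⟩ := Finset.mem_filter.1 hpQ
        rw [Finset.mem_coe, Finset.mem_filter]
        exact ⟨(Finset.mem_product.1 hprod).2, by rw [← hp1]; exact hcard⟩
      · intro p hp q hq heq
        obtain ⟨-, hp1⟩ := Finset.mem_filter.1 hp
        obtain ⟨-, hq1⟩ := Finset.mem_filter.1 hq
        have h2 : p.2 = q.2 := heq
        have h1 : p.1 = q.1 := by rw [hp1, hq1]
        exact Prod.ext h1 h2
    refine hinj.trans ?_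
    have hsub : ((stars r G).filter fun B => (A.verts.toFinset ∩ B.verts.toFinset).card = t)
        ⊆ (A.verts.toFinset.powersetCard t).biUnion
            (fun U => (stars r G).filter fun B => U ⊆ B.verts.toFinset) := by
      intro B hB
      obtain ⟨hBs, hBc⟩ := Finset.mem_filter.1 hB
      rw [Finset.mem_biUnion]
      refine ⟨A.verts.toFinset ∩ B.verts.toFinset, ?_, ?_⟩
      · rw [Finset.mem_powersetCard]
        exact ⟨Finset.inter_subset_left, hBc⟩
      · rw [Finset.mem_filter]
        exact ⟨hBs, Finset.inter_subset_right⟩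
    refine (Finset.card_le_card hsub).trans ?_
    refine (Finset.card_biUnion_le).trans ?_
    have hbound : ∀ U ∈ A.verts.toFinset.powersetCard t,
        ((stars r G).filter fun B => U ⊆ B.verts.toFinset).card
          ≤ (t + 1) * G.maxDegree ^ (r + 1 - t) := by
      intro U hU
      obtain ⟨hUsub, hUcard⟩ := Finset.mem_powersetCard.1 hU
      exact card_containing r t G U (Finset.card_pos.1 (by rw [hUcard]; omega)) hUcard ht
    calc ∑ U ∈ A.verts.toFinset.powersetCard t,
          ((stars r G).filter fun B => U ⊆ B.verts.toFinset).card
        ≤ ∑ _U ∈ A.verts.toFinset.powersetCard t,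
            (t + 1) * G.maxDegree ^ (r + 1 - t) := Finset.sum_le_sum hbound
      _ = (A.verts.toFinset.powersetCard t).card * ((t + 1) * G.maxDegree ^ (r + 1 - t)) := by
          rw [Finset.sum_const, smul_eq_mul]
      _ ≤ (r + 1).choose t * ((t + 1) * G.maxDegree ^ (r + 1 - t)) := by
          rw [Finset.card_powersetCard, stars_verts_card hA]
  calc ∑ A ∈ stars r G, (Q.filter fun p => p.1 = A).card
      ≤ ∑ _A ∈ stars r G, (r + 1).choose t * ((t + 1) * G.maxDegree ^ (r + 1 - t)) :=
        Finset.sum_le_sum hfib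
    _ = (stars r G).card * ((r + 1).choose t * ((t + 1) * G.maxDegree ^ (r + 1 - t))) := by
        rw [Finset.sum_const, smul_eq_mul]

/-- explicit star subgraph -/
def mkStar (G : SimpleGraph V) (w : V) (L : Finset V) (h : ∀ x ∈ L, G.Adj w x) :
    G.Subgraph where
  verts := ↑(insert w L)
  Adj x y := (x = w ∧ y ∈ L) ∨ (y = w ∧ x ∈ L)
  adj_sub := by
    rintro x y (⟨rfl, hy⟩ | ⟨rfl, hx⟩)
    · exact h _ hy
    · exact (h _ hx).symm
  edge_vert := by
    rintro x y (⟨rfl, hy⟩ | ⟨rfl, hx⟩)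
    · exact Finset.mem_coe.2 (Finset.mem_insert_self _ _)
    · exact Finset.mem_coe.2 (Finset.mem_insert_of_mem hx)
  symm := by
    constructor
    rintro x y (h' | h')
    · exact Or.inr h'
    · exact Or.inl h'

lemma mkStar_isStarOn {G : SimpleGraph V} {w : V} {L : Finset V} (h : ∀ x ∈ L, G.Adj w x)
    (hL : L.card = r) : IsStarOn r (mkStar G w L h) w L := by
  refine ⟨fun hw => G.irrefl (h w hw), hL, rfl, fun x y => Iff.rfl⟩

lemma choose_le_card_stars (r : ℕ) (hr : 1 ≤ r) (G : SimpleGraph V) :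
    G.maxDegree.choose r ≤ (stars r G).card := by
  rcases isEmpty_or_nonempty V with hV | hV
  · have : G.maxDegree = 0 := by
      rw [SimpleGraph.maxDegree]
      simp [Finset.univ_eq_empty]
    rw [this, Nat.choose_eq_zero_of_lt hr]
    exact Nat.zero_le _
  · obtain ⟨v0, hv0⟩ := G.exists_maximal_degree_vertex
    have hsub : ∀ L ∈ (G.neighborFinset v0).powersetCard r, ∀ x ∈ L, G.Adj v0 x := by
      intro L hL x hx
      exact (SimpleGraph.mem_neighborFinset _ _ _).1
        ((Finset.mem_powersetCard.1 hL).1 hx)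
    have key : ((G.neighborFinset v0).powersetCard r).card ≤ (stars r G).card := by
      apply Finset.card_le_card_of_injOn
        (fun L => if hL : L ∈ (G.neighborFinset v0).powersetCard r
          then mkStar G v0 L (hsub L hL) else ⊥)
      · intro L hL
        simp only [Finset.mem_coe] at hL ⊢
        rw [dif_pos hL]
        exact mem_stars.2 ⟨v0, L, mkStar_isStarOn _ (Finset.mem_powersetCard.1 hL).2⟩
      · intro L hL L' hL' heq
        have hL2 : L ∈ (G.neighborFinset v0).powersetCard r := hL
        have hL2' : L' ∈ (G.neighborFinset v0).powersetCard r := hL'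
        simp only [dif_pos hL2, dif_pos hL2'] at heq
        have hv : (mkStar G v0 L (hsub L hL2)).verts = (mkStar G v0 L' (hsub L' hL2')).verts := by
          rw [heq]
        have : (insert v0 L : Finset V) = insert v0 L' := Finset.coe_injective hv
        have hw : v0 ∉ L := fun hw => G.irrefl (hsub L hL v0 hw)
        have hw' : v0 ∉ L' := fun hw => G.irrefl (hsub L' hL' v0 hw)
        rw [← Finset.erase_insert hw, ← Finset.erase_insert hw', this]
    calc G.maxDegree.choose r = (G.neighborFinset v0).card.choose r := by
          rw [SimpleGraph.card_neighborFinset_eq_degree, hv0]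
      _ = ((G.neighborFinset v0).powersetCard r).card := (Finset.card_powersetCard _ _).symm
      _ ≤ (stars r G).card := key

/-- `(m+1-k)^k ≤ m.descFactorial k` -/
lemma pow_le_descFactorial (m : ℕ) : ∀ k : ℕ, (m + 1 - k) ^ k ≤ m.descFactorial k
  | 0 => by simp
  | (k + 1) => by
    rw [Nat.descFactorial_succ, pow_succ']
    have h1 : m + 1 - (k + 1) ≤ m - k := by omega
    have h2 : (m + 1 - (k + 1)) ^ k ≤ (m + 1 - k) ^ k :=
      Nat.pow_le_pow_left (by omega) k
    calc (m + 1 - (k + 1)) * (m + 1 - (k + 1)) ^ k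
        ≤ (m - k) * (m + 1 - k) ^ k := Nat.mul_le_mul h1 h2
      _ ≤ (m - k) * m.descFactorial k :=
          Nat.mul_le_mul_left _ (pow_le_descFactorial m k)

/-- `Δ^r ≤ (2r)^r * N` whenever `N ≥ 1`. -/
lemma maxDegree_pow_le (r : ℕ) (hr : 1 ≤ r) (G : SimpleGraph V)
    (hN : 1 ≤ (stars r G).card) :
    G.maxDegree ^ r ≤ (2 * r) ^ r * (stars r G).card := by
  set Δ := G.maxDegree with hΔ
  rcases Nat.lt_or_ge Δ (2 * r) with h | h
  · calc Δ ^ r ≤ (2 * r) ^ r := Nat.pow_le_pow_left h.le r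
      _ ≤ (2 * r) ^ r * (stars r G).card := Nat.le_mul_of_pos_right _ hN
  · have h1 : Δ ≤ 2 * (Δ + 1 - r) := by omega
    have h2 : (Δ + 1 - r) ^ r ≤ r ^ r * (stars r G).card := by
      calc (Δ + 1 - r) ^ r ≤ Δ.descFactorial r := pow_le_descFactorial Δ r
        _ = r.factorial * Δ.choose r := Nat.descFactorial_eq_factorial_mul_choose Δ r
        _ ≤ r ^ r * Δ.choose r := Nat.mul_le_mul_right _ (Nat.factorial_le_pow r)
        _ ≤ r ^ r * (stars r G).card :=
            Nat.mul_le_mul_left _ (choose_le_card_stars r hr G)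
    calc Δ ^ r ≤ (2 * (Δ + 1 - r)) ^ r := Nat.pow_le_pow_left h1 r
      _ = 2 ^ r * (Δ + 1 - r) ^ r := by rw [mul_pow]
      _ ≤ 2 ^ r * (r ^ r * (stars r G).card) := Nat.mul_le_mul_left _ h2
      _ = (2 * r) ^ r * (stars r G).card := by rw [mul_pow]; ring

end Main2

section Main3

variable {V : Type*} [Fintype V] [DecidableEq V]

lemma monoCopyCount_eq (r c : ℕ) (G : SimpleGraph V) (f : V → Fin c) :
    monoCopyCount (starGraph r) G f
      = ((stars r G).filter fun A =>
          ∀ u ∈ A.verts.toFinset, ∀ v ∈ A.verts.toFinset, f u = f v).card := by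
  rw [monoCopyCount, Nat.card_eq_fintype_card, Fintype.card_subtype]
  congr 1
  ext A
  simp only [Finset.mem_filter, Finset.mem_univ, true_and, stars, Set.mem_toFinset]

lemma sum_monoCopyCount (r c : ℕ) (G : SimpleGraph V) :
    ∑ f : V → Fin c, monoCopyCount (starGraph r) G f
      = (stars r G).card * (c * c ^ (Fintype.card V - (r + 1))) := by
  calc ∑ f : V → Fin c, monoCopyCount (starGraph r) G f
      = ∑ f : V → Fin c, ∑ A ∈ stars r G,
          if (∀ u ∈ A.verts.toFinset, ∀ v ∈ A.verts.toFinset, f u = f v) then 1 else 0 := by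
        apply Finset.sum_congr rfl
        intro f _
        rw [monoCopyCount_eq, Finset.card_filter]
    _ = ∑ A ∈ stars r G, ∑ f : V → Fin c,
          if (∀ u ∈ A.verts.toFinset, ∀ v ∈ A.verts.toFinset, f u = f v) then 1 else 0 :=
        Finset.sum_comm
    _ = ∑ A ∈ stars r G, (c * c ^ (Fintype.card V - (r + 1))) := by
        apply Finset.sum_congr rfl
        intro A hA
        rw [← Finset.card_filter]
        rw [card_constOn c A.verts.toFinset
          (Finset.card_pos.1 (by rw [stars_verts_card hA]; omega))]
        rw [stars_verts_card hA]
    _ = (stars r G).card * (c * c ^ (Fintype.card V - (r + 1))) := by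
        rw [Finset.sum_const, smul_eq_mul]

lemma meanMono_eq (r c : ℕ) (G : SimpleGraph V) (hc : 1 ≤ c) :
    meanMono (starGraph r) G c = ((stars r G).card : ℝ) / (c : ℝ) ^ r := by
  have hcast : (∑ f : V → Fin c, (monoCopyCount (starGraph r) G f : ℝ))
      = (((stars r G).card * (c * c ^ (Fintype.card V - (r + 1))) : ℕ) : ℝ) := by
    rw [← sum_monoCopyCount r c G]
    push_cast
    rfl
  rw [meanMono, hcast]
  rcases Nat.eq_zero_or_pos (stars r G).card with hN | hN
  · rw [hN]; simp
  · have hn : r + 1 ≤ Fintype.card V := by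
      obtain ⟨A, hA⟩ := Finset.card_pos.1 hN
      calc r + 1 = A.verts.toFinset.card := (stars_verts_card hA).symm
        _ ≤ Fintype.card V := Finset.card_le_univ _
    have hc0 : (0:ℝ) < (c:ℝ) := by exact_mod_cast hc
    rw [div_eq_div_iff (by positivity) (by positivity)]
    push_cast
    rw [mul_assoc]
    congr 1
    rw [← pow_succ' (c:ℝ), ← pow_add]
    congr 1
    omega

lemma sum_sq_monoCopyCount (r c : ℕ) (G : SimpleGraph V) :
    ∑ f : V → Fin c, monoCopyCount (starGraph r) G f * monoCopyCount (starGraph r) G f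
      = ∑ A ∈ stars r G, ∑ B ∈ stars r G,
          (univ.filter fun f : V → Fin c =>
            (∀ u ∈ A.verts.toFinset, ∀ v ∈ A.verts.toFinset, f u = f v)
            ∧ (∀ u ∈ B.verts.toFinset, ∀ v ∈ B.verts.toFinset, f u = f v)).card := by
  have hite : ∀ (p q : Prop) [Decidable p] [Decidable q],
      (if p then (1:ℕ) else 0) * (if q then (1:ℕ) else 0) = if p ∧ q then 1 else 0 := by
    intro p q _ _
    by_cases hp : p <;> by_cases hq : q <;> simp [hp, hq]
  calc ∑ f : V → Fin c, monoCopyCount (starGraph r) G f * monoCopyCount (starGraph r) G f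
      = ∑ f : V → Fin c, ∑ A ∈ stars r G, ∑ B ∈ stars r G,
          if ((∀ u ∈ A.verts.toFinset, ∀ v ∈ A.verts.toFinset, f u = f v)
            ∧ (∀ u ∈ B.verts.toFinset, ∀ v ∈ B.verts.toFinset, f u = f v)) then 1 else 0 := by
        apply Finset.sum_congr rfl
        intro f _
        rw [monoCopyCount_eq, Finset.card_filter, Finset.sum_mul_sum]
        exact Finset.sum_congr rfl fun A _ => Finset.sum_congr rfl fun B _ => hite _ _
    _ = ∑ A ∈ stars r G, ∑ f : V → Fin c, ∑ B ∈ stars r G,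
          if ((∀ u ∈ A.verts.toFinset, ∀ v ∈ A.verts.toFinset, f u = f v)
            ∧ (∀ u ∈ B.verts.toFinset, ∀ v ∈ B.verts.toFinset, f u = f v)) then 1 else 0 :=
        Finset.sum_comm
    _ = ∑ A ∈ stars r G, ∑ B ∈ stars r G, ∑ f : V → Fin c,
          if ((∀ u ∈ A.verts.toFinset, ∀ v ∈ A.verts.toFinset, f u = f v)
            ∧ (∀ u ∈ B.verts.toFinset, ∀ v ∈ B.verts.toFinset, f u = f v)) then 1 else 0 :=
        Finset.sum_congr rfl fun A _ => Finset.sum_comm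
    _ = ∑ A ∈ stars r G, ∑ B ∈ stars r G,
          (univ.filter fun f : V → Fin c =>
            (∀ u ∈ A.verts.toFinset, ∀ v ∈ A.verts.toFinset, f u = f v)
            ∧ (∀ u ∈ B.verts.toFinset, ∀ v ∈ B.verts.toFinset, f u = f v)).card := by
        apply Finset.sum_congr rfl
        intro A _
        apply Finset.sum_congr rfl
        intro B _
        rw [← Finset.card_filter]

lemma varMono_eq {α : Type*} (F : SimpleGraph α) (G : SimpleGraph V) (c : ℕ) (hc : 1 ≤ c) :
    varMono F G c = (∑ f : V → Fin c, (monoCopyCount F G f : ℝ) ^ 2) /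
        (c : ℝ) ^ Fintype.card V - (meanMono F G c) ^ 2 := by
  set n := Fintype.card V
  have hcn : (0:ℝ) < (c:ℝ) ^ n := by
    have : (0:ℝ) < (c:ℝ) := by exact_mod_cast hc
    positivity
  set μ := meanMono F G c with hμ
  have hcard : (Finset.univ : Finset (V → Fin c)).card = c ^ n := by
    rw [Finset.card_univ, Fintype.card_fun, Fintype.card_fin]
  have hS1 : ∑ f : V → Fin c, (monoCopyCount F G f : ℝ) = (c:ℝ) ^ n * μ := by
    rw [hμ, meanMono]
    field_simp
    rfl
  have hexp : ∑ f : V → Fin c, ((monoCopyCount F G f : ℝ) - μ) ^ 2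
      = (∑ f : V → Fin c, (monoCopyCount F G f : ℝ) ^ 2) - (c:ℝ) ^ n * μ ^ 2 := by
    have : ∀ f : V → Fin c, ((monoCopyCount F G f : ℝ) - μ) ^ 2
        = (monoCopyCount F G f : ℝ) ^ 2 - 2 * μ * (monoCopyCount F G f : ℝ) + μ ^ 2 := by
      intro f; ring
    rw [Finset.sum_congr rfl (fun f _ => this f)]
    rw [Finset.sum_add_distrib, Finset.sum_sub_distrib, ← Finset.mul_sum, hS1,
      Finset.sum_const, hcard]
    push_cast
    ring
  rw [varMono, hexp]
  field_simp
  rw [mul_comm]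

end Main3

section Main4

variable {V : Type*} [Fintype V] [DecidableEq V]

lemma pair_term (r c : ℕ) (G : SimpleGraph V) (hc : 1 ≤ c) {A B : G.Subgraph}
    (hA : A ∈ stars r G) (hB : B ∈ stars r G) :
    ((univ.filter fun f : V → Fin c =>
        (∀ u ∈ A.verts.toFinset, ∀ v ∈ A.verts.toFinset, f u = f v)
        ∧ (∀ u ∈ B.verts.toFinset, ∀ v ∈ B.verts.toFinset, f u = f v)).card : ℝ)
        / (c : ℝ) ^ Fintype.card V - 1 / (c : ℝ) ^ (2 * r)
      ≤ if 2 ≤ (A.verts.toFinset ∩ B.verts.toFinset).card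
        then (c : ℝ) ^ ((A.verts.toFinset ∩ B.verts.toFinset).card - 1) / (c : ℝ) ^ (2 * r)
        else 0 := by
  set n := Fintype.card V with hn
  clear_value n
  set SA := A.verts.toFinset with hSA
  set SB := B.verts.toFinset with hSB
  clear_value SA SB
  have hcA : SA.card = r + 1 := by rw [hSA]; exact stars_verts_card hA
  have hcB : SB.card = r + 1 := by rw [hSB]; exact stars_verts_card hB
  have hAne : SA.Nonempty := Finset.card_pos.1 (by omega)
  have hBne : SB.Nonempty := Finset.card_pos.1 (by omega)
  have hc0 : (0:ℝ) < (c:ℝ) := by exact_mod_cast hc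
  have hcn : (0:ℝ) < (c:ℝ) ^ n := by positivity
  have hc2r : (0:ℝ) < (c:ℝ) ^ (2*r) := by positivity
  rcases Nat.eq_zero_or_pos (SA ∩ SB).card with ht0 | ht1
  · -- disjoint case : the term is zero
    have hdisj : Disjoint SA SB := by
      rw [Finset.disjoint_iff_inter_eq_empty]
      exact Finset.card_eq_zero.1 ht0
    have hifneg : ¬ 2 ≤ (SA ∩ SB).card := by simp [ht0]
    have hcnt := card_constOn_two c SA SB hAne hBne hdisj
    rw [← hn] at hcnt
    have hun : SA.card + SB.card ≤ n := by
      rw [hn]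
      calc SA.card + SB.card = (SA ∪ SB).card := (Finset.card_union_of_disjoint hdisj).symm
        _ ≤ Fintype.card V := Finset.card_le_univ _
    rw [if_neg hifneg, hcnt]
    clear hcnt
    have hkey : (c:ℝ) ^ 2 * (c:ℝ) ^ (n - SA.card - SB.card) * (c:ℝ) ^ (2*r) = (c:ℝ) ^ n := by
      rw [← pow_add, ← pow_add]
      congr 1
      omega
    have : ((c ^ 2 * c ^ (n - SA.card - SB.card) : ℕ) : ℝ) / (c:ℝ) ^ n
        = 1 / (c:ℝ) ^ (2*r) := by
      rw [div_eq_div_iff hcn.ne' hc2r.ne']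
      push_cast
      rw [one_mul, hkey]
    rw [this]
    simp
  · -- intersecting case
    have hinter : (SA ∩ SB).Nonempty := Finset.card_pos.1 ht1
    have hfilter : (univ.filter fun f : V → Fin c =>
        (∀ u ∈ SA, ∀ v ∈ SA, f u = f v) ∧ (∀ u ∈ SB, ∀ v ∈ SB, f u = f v))
        = (univ.filter fun f : V → Fin c => ∀ u ∈ SA ∪ SB, ∀ v ∈ SA ∪ SB, f u = f v) := by
      apply Finset.filter_congr
      intro f _
      exact constOn_union SA SB hinter f
    have hcnt := card_constOn c (SA ∪ SB) (hAne.mono Finset.subset_union_left)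
    rw [← hn] at hcnt
    have huncard : (SA ∪ SB).card + (SA ∩ SB).card = 2 * r + 2 := by
      rw [Finset.card_union_add_card_inter, hcA, hcB]
      ring
    have hun : (SA ∪ SB).card ≤ n := by rw [hn]; exact Finset.card_le_univ _
    have htle : (SA ∩ SB).card ≤ r + 1 := by
      calc (SA ∩ SB).card ≤ SA.card := Finset.card_le_card Finset.inter_subset_left
        _ = r + 1 := hcA
    rw [hfilter, hcnt]
    clear hcnt hfilter
    have hkey : (c:ℝ) * (c:ℝ) ^ (n - (SA ∪ SB).card) * (c:ℝ) ^ (2*r)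
        = (c:ℝ) ^ ((SA ∩ SB).card - 1) * (c:ℝ) ^ n := by
      calc (c:ℝ) * (c:ℝ) ^ (n - (SA ∪ SB).card) * (c:ℝ) ^ (2*r)
          = (c:ℝ) ^ (1 + (n - (SA ∪ SB).card) + 2*r) := by
            rw [pow_add, pow_add, pow_one]
        _ = (c:ℝ) ^ (((SA ∩ SB).card - 1) + n) := by congr 1; omega
        _ = (c:ℝ) ^ ((SA ∩ SB).card - 1) * (c:ℝ) ^ n := pow_add _ _ _
    have heq : ((c * c ^ (n - (SA ∪ SB).card) : ℕ) : ℝ) / (c:ℝ) ^ n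
        = (c:ℝ) ^ ((SA ∩ SB).card - 1) / (c:ℝ) ^ (2*r) := by
      rw [div_eq_div_iff hcn.ne' hc2r.ne']
      push_cast
      rw [hkey]
    rw [heq]
    rcases Nat.lt_or_ge (SA ∩ SB).card 2 with ht2 | ht2
    · -- t = 1 : term is zero
      have ht1' : (SA ∩ SB).card = 1 := by omega
      rw [if_neg (by omega : ¬ 2 ≤ (SA ∩ SB).card)]
      rw [ht1']
      simp
    · rw [if_pos ht2]
      have : (0:ℝ) < 1 / (c:ℝ) ^ (2*r) := by positivity
      linarith

lemma varMono_le (r c : ℕ) (G : SimpleGraph V) (hc : 1 ≤ c) :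
    varMono (starGraph r) G c
      ≤ ∑ t ∈ Finset.Icc 2 (r + 1),
          (((((stars r G) ×ˢ (stars r G)).filter fun p =>
              (p.1.verts.toFinset ∩ p.2.verts.toFinset).card = t).card : ℝ)
            * (c : ℝ) ^ (t - 1)) / (c : ℝ) ^ (2 * r) := by
  set n := Fintype.card V with hn
  have hc0 : (0:ℝ) < (c:ℝ) := by exact_mod_cast hc
  have hcn : (0:ℝ) < (c:ℝ) ^ n := by positivity
  set N := (stars r G).card with hN
  set tc : G.Subgraph × G.Subgraph → ℕ :=
    fun p => (p.1.verts.toFinset ∩ p.2.verts.toFinset).card with htc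
  set cnt : G.Subgraph → G.Subgraph → ℕ := fun A B =>
    (univ.filter fun f : V → Fin c =>
      (∀ u ∈ A.verts.toFinset, ∀ v ∈ A.verts.toFinset, f u = f v)
      ∧ (∀ u ∈ B.verts.toFinset, ∀ v ∈ B.verts.toFinset, f u = f v)).card with hcnt
  -- variance as a sum over pairs
  have hvar : varMono (starGraph r) G c
      = ∑ p ∈ (stars r G) ×ˢ (stars r G),
          ((cnt p.1 p.2 : ℝ) / (c:ℝ) ^ n - 1 / (c:ℝ) ^ (2*r)) := by
    rw [varMono_eq (starGraph r) G c hc, meanMono_eq r c G hc]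
    have hsq : ∑ f : V → Fin c, (monoCopyCount (starGraph r) G f : ℝ) ^ 2
        = ∑ p ∈ (stars r G) ×ˢ (stars r G), (cnt p.1 p.2 : ℝ) := by
      have := sum_sq_monoCopyCount r c G
      have hcast : ∑ f : V → Fin c, (monoCopyCount (starGraph r) G f : ℝ) ^ 2
          = ((∑ f : V → Fin c,
              monoCopyCount (starGraph r) G f * monoCopyCount (starGraph r) G f : ℕ) : ℝ) := by
        push_cast
        apply Finset.sum_congr rfl
        intro f _
        ring
      rw [hcast, this]
      rw [Finset.sum_product]
      push_cast
      rfl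
    rw [hsq, Finset.sum_sub_distrib]
    rw [Finset.sum_div]
    congr 1
    rw [Finset.sum_const, Finset.card_product]
    rw [div_pow, ← hN]
    rw [nsmul_eq_mul]
    push_cast
    rw [← pow_mul]
    ring
  rw [hvar]
  -- bound each pair term by the ite
  have hstep : ∑ p ∈ (stars r G) ×ˢ (stars r G),
        ((cnt p.1 p.2 : ℝ) / (c:ℝ) ^ n - 1 / (c:ℝ) ^ (2*r))
      ≤ ∑ p ∈ (stars r G) ×ˢ (stars r G),
          (if 2 ≤ tc p then (c:ℝ) ^ (tc p - 1) / (c:ℝ) ^ (2*r) else 0) := by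
    apply Finset.sum_le_sum
    intro p hp
    obtain ⟨hpA, hpB⟩ := Finset.mem_product.1 hp
    exact pair_term r c G hc hpA hpB
  refine hstep.trans ?_
  rw [← Finset.sum_filter]
  -- fiberwise over the intersection size
  have hmaps : ∀ p ∈ ((stars r G) ×ˢ (stars r G)).filter (fun p => 2 ≤ tc p),
      tc p ∈ Finset.Icc 2 (r + 1) := by
    intro p hp
    obtain ⟨hprod, h2⟩ := Finset.mem_filter.1 hp
    obtain ⟨hpA, -⟩ := Finset.mem_product.1 hprod
    rw [Finset.mem_Icc]
    refine ⟨h2, ?_⟩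
    calc tc p ≤ p.1.verts.toFinset.card := Finset.card_le_card Finset.inter_subset_left
      _ = r + 1 := stars_verts_card hpA
  rw [← Finset.sum_fiberwise_of_maps_to hmaps (fun p => (c:ℝ) ^ (tc p - 1) / (c:ℝ) ^ (2*r))]
  apply Finset.sum_le_sum
  intro t ht
  have hinner : ∑ p ∈ (((stars r G) ×ˢ (stars r G)).filter (fun p => 2 ≤ tc p)).filter
        (fun p => tc p = t), (c:ℝ) ^ (tc p - 1) / (c:ℝ) ^ (2*r)
      = ((((stars r G) ×ˢ (stars r G)).filter (fun p => 2 ≤ tc p)).filter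
        (fun p => tc p = t)).card * ((c:ℝ) ^ (t - 1) / (c:ℝ) ^ (2*r)) := by
    rw [Finset.sum_congr rfl (fun p hp => by
      rw [(Finset.mem_filter.1 hp).2])]
    rw [Finset.sum_const, nsmul_eq_mul]
  rw [hinner]
  have hsub : (((stars r G) ×ˢ (stars r G)).filter (fun p => 2 ≤ tc p)).filter
        (fun p => tc p = t)
      ⊆ ((stars r G) ×ˢ (stars r G)).filter (fun p => tc p = t) := by
    intro p hp
    obtain ⟨hp1, hp2⟩ := Finset.mem_filter.1 hp
    exact Finset.mem_filter.2 ⟨(Finset.mem_filter.1 hp1).1, hp2⟩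
  have hcards : (((((stars r G) ×ˢ (stars r G)).filter (fun p => 2 ≤ tc p)).filter
        (fun p => tc p = t)).card : ℝ)
      ≤ ((((stars r G) ×ˢ (stars r G)).filter (fun p => tc p = t)).card : ℝ) := by
    exact_mod_cast Finset.card_le_card hsub
  calc (((((stars r G) ×ˢ (stars r G)).filter (fun p => 2 ≤ tc p)).filter
        (fun p => tc p = t)).card : ℝ) * ((c:ℝ) ^ (t - 1) / (c:ℝ) ^ (2*r))
      ≤ ((((stars r G) ×ˢ (stars r G)).filter (fun p => tc p = t)).card : ℝ)
          * ((c:ℝ) ^ (t - 1) / (c:ℝ) ^ (2*r)) :=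
        mul_le_mul_of_nonneg_right hcards (by positivity)
    _ = ((((stars r G) ×ˢ (stars r G)).filter (fun p => tc p = t)).card : ℝ)
          * (c:ℝ) ^ (t - 1) / (c:ℝ) ^ (2*r) := by ring

end Main4

section Main5

variable {V : Type*} [Fintype V] [DecidableEq V]

lemma varMono_nonneg {α : Type*} (F : SimpleGraph α) (G : SimpleGraph V) (c : ℕ) :
    0 ≤ varMono F G c := by
  rw [varMono]
  apply div_nonneg
  · apply Finset.sum_nonneg
    intro f _
    positivity
  · positivity

lemma cheb {α : Type*} (F : SimpleGraph α) (G : SimpleGraph V) (c : ℕ) (hc : 1 ≤ c)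
    (ε : ℝ) (hε : 0 < ε) (hμ : 0 < meanMono F G c) :
    (Nat.card {f : V → Fin c // ε < |(monoCopyCount F G f : ℝ) / meanMono F G c - 1|} : ℝ)
        / (c : ℝ) ^ Fintype.card V
      ≤ varMono F G c / (ε ^ 2 * (meanMono F G c) ^ 2) := by
  set μ := meanMono F G c with hμdef
  set n := Fintype.card V with hn
  have hc0 : (0:ℝ) < (c:ℝ) := by exact_mod_cast hc
  have hcn : (0:ℝ) < (c:ℝ) ^ n := by positivity
  have hcard : (Nat.card {f : V → Fin c // ε < |(monoCopyCount F G f : ℝ) / μ - 1|})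
      = (univ.filter fun f : V → Fin c => ε < |(monoCopyCount F G f : ℝ) / μ - 1|).card := by
    rw [Nat.card_eq_fintype_card, Fintype.card_subtype]
  have hpoint : ∀ f ∈ univ.filter (fun f : V → Fin c =>
      ε < |(monoCopyCount F G f : ℝ) / μ - 1|),
      ε ^ 2 * μ ^ 2 ≤ ((monoCopyCount F G f : ℝ) - μ) ^ 2 := by
    intro f hf
    have hf' := (Finset.mem_filter.1 hf).2
    have habs : |(monoCopyCount F G f : ℝ) / μ - 1| = |(monoCopyCount F G f : ℝ) - μ| / μ := by
      have h0 : (monoCopyCount F G f : ℝ) / μ - 1 = ((monoCopyCount F G f : ℝ) - μ) / μ := by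
        field_simp
      rw [h0, abs_div, abs_of_pos hμ]
    rw [habs, lt_div_iff₀ hμ] at hf'
    have h2 : (ε * μ) ^ 2 < |(monoCopyCount F G f : ℝ) - μ| ^ 2 :=
      pow_lt_pow_left₀ hf' (by positivity) (by norm_num)
    rw [sq_abs] at h2
    calc ε ^ 2 * μ ^ 2 = (ε * μ) ^ 2 := by ring
      _ ≤ ((monoCopyCount F G f : ℝ) - μ) ^ 2 := h2.le
  have hsum : ((univ.filter fun f : V → Fin c =>
        ε < |(monoCopyCount F G f : ℝ) / μ - 1|).card : ℝ) * (ε ^ 2 * μ ^ 2)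
      ≤ ∑ f : V → Fin c, ((monoCopyCount F G f : ℝ) - μ) ^ 2 := by
    calc ((univ.filter fun f : V → Fin c =>
          ε < |(monoCopyCount F G f : ℝ) / μ - 1|).card : ℝ) * (ε ^ 2 * μ ^ 2)
        = ∑ _f ∈ univ.filter (fun f : V → Fin c =>
            ε < |(monoCopyCount F G f : ℝ) / μ - 1|), (ε ^ 2 * μ ^ 2) := by
          rw [Finset.sum_const, nsmul_eq_mul]
      _ ≤ ∑ f ∈ univ.filter (fun f : V → Fin c =>
            ε < |(monoCopyCount F G f : ℝ) / μ - 1|),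
            ((monoCopyCount F G f : ℝ) - μ) ^ 2 := Finset.sum_le_sum hpoint
      _ ≤ ∑ f : V → Fin c, ((monoCopyCount F G f : ℝ) - μ) ^ 2 :=
          Finset.sum_le_sum_of_subset_of_nonneg (Finset.filter_subset _ _)
            (fun f _ _ => by positivity)
  rw [hcard]
  rw [div_le_div_iff₀ hcn (by positivity)]
  calc ((univ.filter fun f : V → Fin c =>
        ε < |(monoCopyCount F G f : ℝ) / μ - 1|).card : ℝ) * (ε ^ 2 * μ ^ 2)
      ≤ ∑ f : V → Fin c, ((monoCopyCount F G f : ℝ) - μ) ^ 2 := hsum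
    _ = varMono F G c * (c : ℝ) ^ n := by
        rw [varMono]
        rw [div_mul_cancel₀]
        exact hcn.ne'
    _ ≤ varMono F G c * (c : ℝ) ^ n := le_refl _

lemma var_ratio_bound (r c : ℕ) (G : SimpleGraph V) (hr : 1 ≤ r) (hc : 1 ≤ c)
    (hμ : 1 ≤ meanMono (starGraph r) G c) :
    varMono (starGraph r) G c / (meanMono (starGraph r) G c) ^ 2
      ≤ ∑ t ∈ Finset.Icc 2 (r + 1),
          (((r + 1).choose t * (t + 1) : ℕ) : ℝ) * (G.maxDegree : ℝ) ^ (r + 1 - t)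
            * (c : ℝ) ^ (t - 1) / ((stars r G).card : ℝ) := by
  have hc0 : (0:ℝ) < (c:ℝ) := by exact_mod_cast hc
  have hμeq := meanMono_eq r c G hc
  set μ := meanMono (starGraph r) G c with hμdef
  set N := ((stars r G).card : ℝ) with hNdef
  have hμ0 : (0:ℝ) < μ := lt_of_lt_of_le one_pos hμ
  have hN1 : (1:ℝ) ≤ N := by
    have : μ ≤ N := by
      rw [hμeq]
      rw [div_le_iff₀ (by positivity)]
      nlinarith [one_le_pow₀ (show (1:ℝ) ≤ (c:ℝ) by exact_mod_cast hc) (n := r)]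
    linarith
  have hN0 : (0:ℝ) < N := lt_of_lt_of_le one_pos hN1
  have hvar := varMono_le r c G hc
  -- bound each pair count
  have hsum : ∑ t ∈ Finset.Icc 2 (r + 1),
        (((((stars r G) ×ˢ (stars r G)).filter fun p =>
            (p.1.verts.toFinset ∩ p.2.verts.toFinset).card = t).card : ℝ)
          * (c : ℝ) ^ (t - 1)) / (c : ℝ) ^ (2 * r)
      ≤ ∑ t ∈ Finset.Icc 2 (r + 1),
          (N * ((((r + 1).choose t * (t + 1) : ℕ) : ℝ) * (G.maxDegree : ℝ) ^ (r + 1 - t))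
            * (c : ℝ) ^ (t - 1)) / (c : ℝ) ^ (2 * r) := by
    apply Finset.sum_le_sum
    intro t ht
    obtain ⟨ht2, htr⟩ := Finset.mem_Icc.1 ht
    have hcp := card_pairs r t G (by omega) htr
    have hcast : ((((stars r G) ×ˢ (stars r G)).filter fun p =>
          (p.1.verts.toFinset ∩ p.2.verts.toFinset).card = t).card : ℝ)
        ≤ N * ((((r + 1).choose t * (t + 1) : ℕ) : ℝ) * (G.maxDegree : ℝ) ^ (r + 1 - t)) := by
      rw [hNdef]
      have := hcp
      calc ((((stars r G) ×ˢ (stars r G)).filter fun p =>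
            (p.1.verts.toFinset ∩ p.2.verts.toFinset).card = t).card : ℝ)
          ≤ (((stars r G).card * ((r + 1).choose t * ((t + 1) * G.maxDegree ^ (r + 1 - t))) : ℕ) : ℝ) := by
            exact_mod_cast this
        _ = ((stars r G).card : ℝ) * ((((r + 1).choose t * (t + 1) : ℕ) : ℝ)
              * (G.maxDegree : ℝ) ^ (r + 1 - t)) := by
            push_cast
            ring
    apply div_le_div_of_nonneg_right ?_ (by positivity)
    apply mul_le_mul_of_nonneg_right hcast (by positivity)
  have hvar2 : varMono (starGraph r) G c
      ≤ ∑ t ∈ Finset.Icc 2 (r + 1),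
          (N * ((((r + 1).choose t * (t + 1) : ℕ) : ℝ) * (G.maxDegree : ℝ) ^ (r + 1 - t))
            * (c : ℝ) ^ (t - 1)) / (c : ℝ) ^ (2 * r) := le_trans hvar hsum
  have hdiv : varMono (starGraph r) G c / μ ^ 2
      ≤ (∑ t ∈ Finset.Icc 2 (r + 1),
          (N * ((((r + 1).choose t * (t + 1) : ℕ) : ℝ) * (G.maxDegree : ℝ) ^ (r + 1 - t))
            * (c : ℝ) ^ (t - 1)) / (c : ℝ) ^ (2 * r)) / μ ^ 2 :=
    div_le_div_of_nonneg_right hvar2 (by positivity)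
  refine hdiv.trans_eq ?_
  rw [Finset.sum_div]
  apply Finset.sum_congr rfl
  intro t ht
  rw [hμeq]
  have hcr : (0:ℝ) < (c:ℝ) ^ r := by positivity
  have h2r : ((c:ℝ) ^ r) ^ 2 = (c:ℝ) ^ (2 * r) := by
    rw [← pow_mul]
    ring_nf
  rw [div_pow, ← h2r]
  field_simp
end Main5

section Limits

/-- if `x_n ≥ 0` and `x_n ^ r → 0` with `r ≥ 1` then `x_n → 0`. -/
lemma tendsto_of_pow_tendsto {x : ℕ → ℝ} {r : ℕ} (hr : 1 ≤ r)
    (hx : ∀ᶠ n in atTop, 0 ≤ x n)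
    (h : Tendsto (fun n => x n ^ r) atTop (nhds 0)) : Tendsto x atTop (nhds 0) := by
  rw [NormedAddCommGroup.tendsto_nhds_zero] at h ⊢
  intro ε hε
  have hεr : 0 < ε ^ r := by positivity
  filter_upwards [h (ε ^ r) hεr, hx] with n hn hxn
  rw [Real.norm_eq_abs, abs_of_nonneg hxn]
  rw [Real.norm_eq_abs, abs_of_nonneg (by positivity)] at hn
  exact lt_of_pow_lt_pow_left₀ r hε.le hn

end Limits

section Main6

variable {V : Type*} [Fintype V] [DecidableEq V]

lemma g_pow_bound (r t c : ℕ) (G : SimpleGraph V) (hr : 1 ≤ r) (hc : 1 ≤ c)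
    (ht2 : 2 ≤ t) (htr : t ≤ r + 1) (hμ : 1 ≤ meanMono (starGraph r) G c) :
    ((G.maxDegree : ℝ) ^ (r + 1 - t) * (c : ℝ) ^ (t - 1) / ((stars r G).card : ℝ)) ^ r
      ≤ ((2 * r : ℕ) : ℝ) ^ (r * (r + 1 - t)) * (1 / meanMono (starGraph r) G c) := by
  have hc0 : (0:ℝ) < (c:ℝ) := by exact_mod_cast hc
  have hμeq := meanMono_eq r c G hc
  set μ := meanMono (starGraph r) G c with hμdef
  set N := ((stars r G).card : ℝ) with hNdef
  have hμ0 : (0:ℝ) < μ := lt_of_lt_of_le one_pos hμ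
  have hN1 : (1:ℝ) ≤ N := by
    have : μ ≤ N := by
      rw [hμeq]
      rw [div_le_iff₀ (by positivity)]
      nlinarith [one_le_pow₀ (show (1:ℝ) ≤ (c:ℝ) by exact_mod_cast hc) (n := r)]
    linarith
  have hN0 : (0:ℝ) < N := lt_of_lt_of_le one_pos hN1
  have hNnat : 1 ≤ (stars r G).card := by
    have := hN1
    rw [hNdef] at this
    exact_mod_cast this
  have hD : (G.maxDegree : ℝ) ^ r ≤ ((2 * r : ℕ) : ℝ) ^ r * N := by
    have := maxDegree_pow_le r hr G hNnat
    calc (G.maxDegree : ℝ) ^ r = ((G.maxDegree ^ r : ℕ) : ℝ) := by push_cast; ring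
      _ ≤ (((2 * r) ^ r * (stars r G).card : ℕ) : ℝ) := by exact_mod_cast this
      _ = ((2 * r : ℕ) : ℝ) ^ r * N := by push_cast; ring
  have hinv : (c : ℝ) ^ r / N = 1 / μ := by
    rw [hμeq, one_div_div]
  obtain ⟨a, b, hab, ha, hb⟩ : ∃ a b, a + b = r ∧ r + 1 - t = a ∧ t - 1 = b :=
    ⟨r + 1 - t, t - 1, by omega, rfl, rfl⟩
  rw [ha, hb]
  set D := (G.maxDegree : ℝ) with hDdef
  set C := (c : ℝ) with hCdef
  set K := ((2 * r : ℕ) : ℝ) with hKdef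
  have hK0 : (0:ℝ) ≤ K := by positivity
  have hD0 : (0:ℝ) ≤ D := by positivity
  have hC0 : (0:ℝ) < C := hc0
  have step1 : (D ^ a * C ^ b / N) ^ r = (D ^ r) ^ a * (C ^ b) ^ r / N ^ r := by
    rw [div_pow, mul_pow]
    congr 2
    rw [← pow_mul, ← pow_mul]
    ring_nf
  have step2 : (D ^ r) ^ a ≤ (K ^ r * N) ^ a :=
    pow_le_pow_left₀ (by positivity) hD a
  have step3 : (D ^ r) ^ a * (C ^ b) ^ r / N ^ r ≤ (K ^ r * N) ^ a * (C ^ b) ^ r / N ^ r := by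
    apply div_le_div_of_nonneg_right ?_ (by positivity)
    apply mul_le_mul_of_nonneg_right step2 (by positivity)
  have step4 : (K ^ r * N) ^ a * (C ^ b) ^ r / N ^ r = K ^ (r * a) * (C ^ r / N) ^ b := by
    subst hab
    rw [mul_pow, div_pow]
    rw [pow_add N a b]
    field_simp
    ring_nf
  have step5 : (C ^ r / N) ^ b ≤ 1 / μ := by
    rw [hinv]
    have hb1 : 1 ≤ b := by omega
    have h01 : (0:ℝ) ≤ 1 / μ := by positivity
    have h11 : 1 / μ ≤ 1 := by
      rw [div_le_one hμ0]
      exact hμ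
    calc (1 / μ) ^ b ≤ (1 / μ) ^ 1 := pow_le_pow_of_le_one h01 h11 hb1
      _ = 1 / μ := pow_one _
  calc (D ^ a * C ^ b / N) ^ r = (D ^ r) ^ a * (C ^ b) ^ r / N ^ r := step1
    _ ≤ (K ^ r * N) ^ a * (C ^ b) ^ r / N ^ r := step3
    _ = K ^ (r * a) * (C ^ r / N) ^ b := step4
    _ ≤ K ^ (r * a) * (1 / μ) := mul_le_mul_of_nonneg_left step5 (by positivity)

end Main6


/-- If `G_n` is colored uniformly with `c_n → ∞` colors and `E[T(K_{1,r},G_n)] → ∞`, then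
`Var T = o((E T)^2)`, `T/E[T] → 1` in probability, and `T → ∞` in probability. -/
theorem stmt9 (r : ℕ) (hr : 1 ≤ r) (V : ℕ → Type) [∀ n, Fintype (V n)]
    [∀ n, DecidableEq (V n)] (G : ∀ n, SimpleGraph (V n)) (c : ℕ → ℕ)
    (hc : Tendsto c atTop atTop)
    (hmean : Tendsto (fun n => meanMono (starGraph r) (G n) (c n)) atTop atTop) :
    Tendsto (fun n => varMono (starGraph r) (G n) (c n) /
        (meanMono (starGraph r) (G n) (c n)) ^ 2) atTop (nhds 0) ∧
    (∀ ε : ℝ, 0 < ε →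
      Tendsto (fun n =>
        (Nat.card {f : V n → Fin (c n) //
            ε < |(monoCopyCount (starGraph r) (G n) f : ℝ) /
                  meanMono (starGraph r) (G n) (c n) - 1|} : ℝ) /
          (c n : ℝ) ^ Fintype.card (V n)) atTop (nhds 0)) ∧
    (∀ M : ℝ,
      Tendsto (fun n =>
        (Nat.card {f : V n → Fin (c n) //
            (monoCopyCount (starGraph r) (G n) f : ℝ) ≤ M} : ℝ) /
          (c n : ℝ) ^ Fintype.card (V n)) atTop (nhds 0)) := by
  have hev : ∀ᶠ n in atTop, 1 ≤ c n := hc.eventually_ge_atTop 1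
  have hevμ : ∀ᶠ n in atTop, 1 ≤ meanMono (starGraph r) (G n) (c n) :=
    hmean.eventually_ge_atTop 1
  have hinvμ : Tendsto (fun n => 1 / meanMono (starGraph r) (G n) (c n)) atTop (nhds 0) := by
    have := hmean.inv_tendsto_atTop
    simp only [one_div]
    exact this
  -- Part 1
  have h1 : Tendsto (fun n => varMono (starGraph r) (G n) (c n) /
      (meanMono (starGraph r) (G n) (c n)) ^ 2) atTop (nhds 0) := by
    apply squeeze_zero'
    · filter_upwards with n
      exact div_nonneg (varMono_nonneg _ _ _) (sq_nonneg _)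
    · filter_upwards [hev, hevμ] with n hcn hμn
      exact var_ratio_bound r (c n) (G n) hr hcn hμn
    · have hterm : ∀ t ∈ Finset.Icc 2 (r + 1), Tendsto (fun n =>
          ((((r + 1).choose t * (t + 1) : ℕ)) : ℝ) * (((G n).maxDegree : ℝ) ^ (r + 1 - t)
            * (c n : ℝ) ^ (t - 1) / ((stars r (G n)).card : ℝ))) atTop (nhds 0) := by
        intro t ht
        obtain ⟨ht2, htr⟩ := Finset.mem_Icc.1 ht
        have hg : Tendsto (fun n => ((G n).maxDegree : ℝ) ^ (r + 1 - t) * (c n : ℝ) ^ (t - 1)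
            / ((stars r (G n)).card : ℝ)) atTop (nhds 0) := by
          apply tendsto_of_pow_tendsto hr
          · filter_upwards with n
            positivity
          · apply squeeze_zero'
            · filter_upwards with n
              positivity
            · filter_upwards [hev, hevμ] with n hcn hμn
              exact g_pow_bound r t (c n) (G n) hr hcn ht2 htr hμn
            · simpa using hinvμ.const_mul (((2 * r : ℕ) : ℝ) ^ (r * (r + 1 - t)))
        simpa using hg.const_mul ((((r + 1).choose t * (t + 1) : ℕ)) : ℝ)
      have hfun : (fun n => ∑ t ∈ Finset.Icc 2 (r + 1),
            ((((r + 1).choose t * (t + 1) : ℕ)) : ℝ) * ((G n).maxDegree : ℝ) ^ (r + 1 - t)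
              * (c n : ℝ) ^ (t - 1) / ((stars r (G n)).card : ℝ))
          = (fun n => ∑ t ∈ Finset.Icc 2 (r + 1),
            ((((r + 1).choose t * (t + 1) : ℕ)) : ℝ) * (((G n).maxDegree : ℝ) ^ (r + 1 - t)
              * (c n : ℝ) ^ (t - 1) / ((stars r (G n)).card : ℝ)))  := by
        funext n
        exact Finset.sum_congr rfl (fun t _ => by ring)
      rw [hfun]
      have := tendsto_finset_sum (Finset.Icc 2 (r + 1)) hterm
      simpa using this
  -- Part 2
  have h2 : ∀ ε : ℝ, 0 < ε →
      Tendsto (fun n =>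
        (Nat.card {f : V n → Fin (c n) //
            ε < |(monoCopyCount (starGraph r) (G n) f : ℝ) /
                  meanMono (starGraph r) (G n) (c n) - 1|} : ℝ) /
          (c n : ℝ) ^ Fintype.card (V n)) atTop (nhds 0) := by
    intro ε hε
    apply squeeze_zero'
    · filter_upwards with n
      positivity
    · filter_upwards [hev, hevμ] with n hcn hμn
      exact cheb (starGraph r) (G n) (c n) hcn ε hε (lt_of_lt_of_le one_pos hμn)
    · have heq : (fun n => varMono (starGraph r) (G n) (c n) /
            (ε ^ 2 * (meanMono (starGraph r) (G n) (c n)) ^ 2))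
          = fun n => (varMono (starGraph r) (G n) (c n) /
            (meanMono (starGraph r) (G n) (c n)) ^ 2) * (1 / ε ^ 2) := by
        funext n
        rw [mul_comm (ε ^ 2), ← div_div, div_eq_mul_one_div]
      rw [heq]
      have := h1.mul_const (1 / ε ^ 2)
      rw [zero_mul] at this
      exact this
  -- Part 3
  have h3 : ∀ M : ℝ,
      Tendsto (fun n =>
        (Nat.card {f : V n → Fin (c n) //
            (monoCopyCount (starGraph r) (G n) f : ℝ) ≤ M} : ℝ) /
          (c n : ℝ) ^ Fintype.card (V n)) atTop (nhds 0) := by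
    intro M
    apply squeeze_zero' (g := fun n =>
      (Nat.card {f : V n → Fin (c n) //
          (1:ℝ)/2 < |(monoCopyCount (starGraph r) (G n) f : ℝ) /
                meanMono (starGraph r) (G n) (c n) - 1|} : ℝ) /
        (c n : ℝ) ^ Fintype.card (V n))
    · filter_upwards with n
      positivity
    · filter_upwards [hev, hevμ, hmean.eventually_ge_atTop (2 * M + 2)] with n hcn hμn hμM
      have hμ0 : (0:ℝ) < meanMono (starGraph r) (G n) (c n) := lt_of_lt_of_le one_pos hμn
      have hc0 : (0:ℝ) < (c n : ℝ) := by exact_mod_cast hcn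
      have hsub : (univ.filter fun f : V n → Fin (c n) =>
            (monoCopyCount (starGraph r) (G n) f : ℝ) ≤ M)
          ⊆ (univ.filter fun f : V n → Fin (c n) =>
            (1:ℝ)/2 < |(monoCopyCount (starGraph r) (G n) f : ℝ) /
                meanMono (starGraph r) (G n) (c n) - 1|) := by
        intro f hf
        rw [Finset.mem_filter] at hf ⊢
        refine ⟨Finset.mem_univ _, ?_⟩
        have hTM : (monoCopyCount (starGraph r) (G n) f : ℝ) ≤ M := hf.2
        have hT0 : (0:ℝ) ≤ (monoCopyCount (starGraph r) (G n) f : ℝ) := by positivity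
        have h2M : M / meanMono (starGraph r) (G n) (c n) < 1/2 := by
          rw [div_lt_iff₀ hμ0]
          linarith
        have hTμ : (monoCopyCount (starGraph r) (G n) f : ℝ) /
            meanMono (starGraph r) (G n) (c n)
            ≤ M / meanMono (starGraph r) (G n) (c n) :=
          div_le_div_of_nonneg_right hTM hμ0.le
        calc (1:ℝ)/2 < -((monoCopyCount (starGraph r) (G n) f : ℝ) /
              meanMono (starGraph r) (G n) (c n) - 1) := by linarith
          _ ≤ |(monoCopyCount (starGraph r) (G n) f : ℝ) /
              meanMono (starGraph r) (G n) (c n) - 1| := neg_le_abs _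
      have hcard1 : (Nat.card {f : V n → Fin (c n) //
          (monoCopyCount (starGraph r) (G n) f : ℝ) ≤ M})
          = (univ.filter fun f : V n → Fin (c n) =>
            (monoCopyCount (starGraph r) (G n) f : ℝ) ≤ M).card := by
        rw [Nat.card_eq_fintype_card, Fintype.card_subtype]
      have hcard2 : (Nat.card {f : V n → Fin (c n) //
          (1:ℝ)/2 < |(monoCopyCount (starGraph r) (G n) f : ℝ) /
              meanMono (starGraph r) (G n) (c n) - 1|})
          = (univ.filter fun f : V n → Fin (c n) =>
            (1:ℝ)/2 < |(monoCopyCount (starGraph r) (G n) f : ℝ) /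
                meanMono (starGraph r) (G n) (c n) - 1|).card := by
        rw [Nat.card_eq_fintype_card, Fintype.card_subtype]
      rw [hcard1, hcard2]
      apply div_le_div_of_nonneg_right ?_ (by positivity)
      exact_mod_cast Finset.card_le_card hsub
    · exact h2 (1/2) (by norm_num)
  exact ⟨h1, h2, h3⟩
end

section
/- Let H be a connected graph that is not a star graph, and let P_n(H) be the pyramid of H of height n: the union of n copies H_1,...,H_n of H, all sharing the same first |V(H)|-1 vertices {1,...,|V(H)|-1}, with the last vertex replaced by distinct new vertices z_1,...,z_n. Then every copy of H inside P_n(H) passes through at least two vertices of the base set {1,...,|V(H)|-1}. -/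
open Finset

/-- The pyramid of `H` of height `n`: the union of `n` copies of `H`, all sharing the same
base vertices (the first `m = |V(H)|-1` vertices of `H`), the apex vertex of `H` being
replaced by `n` distinct new vertices. -/
def pyramid {m : ℕ} (H : SimpleGraph (Fin (m + 1))) (n : ℕ) : SimpleGraph (Fin m ⊕ Fin n) :=
  SimpleGraph.fromRel (fun x y =>
    match x, y with
    | Sum.inl u, Sum.inl v => H.Adj u.castSucc v.castSucc
    | Sum.inl u, Sum.inr _ => H.Adj u.castSucc (Fin.last m)
    | _, _ => False)

lemma star_of_central {m : ℕ} (H : SimpleGraph (Fin (m+1))) (hconn : H.Connected)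
    (v0 : Fin (m+1)) (hc : ∀ u v, H.Adj u v → u = v0 ∨ v = v0) :
    Nonempty (H ≃g starGraph m) := by
  have hadj : ∀ u, u ≠ v0 → H.Adj u v0 := by
    intro u hu
    obtain ⟨w⟩ := hconn u v0
    cases w with
    | nil => exact absurd rfl hu
    | cons h p =>
      rcases hc _ _ h with h1 | h1
      · exact absurd h1 hu
      · rwa [h1] at h
  have hswap : ∀ a : Fin (m+1), Equiv.swap v0 0 a = 0 ↔ a = v0 := by
    intro a
    constructor
    · intro h
      have := (Equiv.swap v0 0).injective (h.trans (Equiv.swap_apply_left v0 0).symm)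
      exact this
    · intro h; rw [h]; exact Equiv.swap_apply_left v0 0
  refine ⟨⟨Equiv.swap v0 0, ?_⟩⟩
  intro a b
  simp only [starGraph, SimpleGraph.fromRel_adj]
  constructor
  · rintro ⟨hne, h | h⟩
    · have hab : a ≠ b := fun e => hne (by rw [e])
      rw [hswap] at h
      subst h
      exact (hadj b (Ne.symm hab)).symm
    · have hab : a ≠ b := fun e => hne (by rw [e])
      rw [hswap] at h
      subst h
      exact hadj a hab
  · intro h
    refine ⟨fun e => h.ne ((Equiv.swap v0 0).injective e), ?_⟩
    rcases hc _ _ h with rfl | rfl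
    · left; exact (hswap _).mpr rfl
    · right; exact (hswap _).mpr rfl

/-- If `H` is connected and not a star graph, then every copy of `H` inside the pyramid
`P_n(H)` passes through at least two base vertices. -/
theorem stmt10 {m n : ℕ} (H : SimpleGraph (Fin (m + 1))) (hconn : H.Connected)
    (hstar : ∀ r : ℕ, IsEmpty (H ≃g starGraph r)) :
    ∀ A : (pyramid H n).Subgraph, Nonempty (A.coe ≃g H) →
      2 ≤ (A.verts ∩ Set.range (Sum.inl : Fin m → Fin m ⊕ Fin n)).ncard := by
  intro A hA
  obtain ⟨e⟩ := hA
  by_contra hlt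
  push_neg at hlt
  have hle : (A.verts ∩ Set.range (Sum.inl : Fin m → Fin m ⊕ Fin n)).ncard ≤ 1 :=
    Nat.lt_succ_iff.mp hlt
  have single : ∀ a b, a ∈ A.verts ∩ Set.range (Sum.inl : Fin m → Fin m ⊕ Fin n) →
      b ∈ A.verts ∩ Set.range (Sum.inl : Fin m → Fin m ⊕ Fin n) → a = b :=
    fun _ _ ha hb => (Set.ncard_le_one_iff (Set.toFinite _)).mp hle ha hb
  set f := e.symm with hf
  have key : ∀ u v, H.Adj u v →
      (∃ k, ((f u : A.verts) : Fin m ⊕ Fin n) = Sum.inl k) ∨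
      (∃ k, ((f v : A.verts) : Fin m ⊕ Fin n) = Sum.inl k) := by
    intro u v huv
    have hA2 : A.Adj ((f u : A.verts) : Fin m ⊕ Fin n) ((f v : A.verts) : Fin m ⊕ Fin n) :=
      f.map_rel_iff.mpr huv
    have hp : (pyramid H n).Adj _ _ := A.adj_sub hA2
    obtain ⟨-, h | h⟩ := (SimpleGraph.fromRel_adj _ _ _).mp hp
    all_goals
      rcases hx : ((f u : A.verts) : Fin m ⊕ Fin n) with k | z
      · exact Or.inl ⟨k, rfl⟩
      · rcases hy : ((f v : A.verts) : Fin m ⊕ Fin n) with k | z'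
        · exact Or.inr ⟨k, rfl⟩
        · rw [hx, hy] at h; exact absurd h (by simp)
  have hcentral : ∃ v0, ∀ u v, H.Adj u v → u = v0 ∨ v = v0 := by
    by_cases hE : ∃ x, ∃ k, ((f x : A.verts) : Fin m ⊕ Fin n) = Sum.inl k
    · obtain ⟨v0, k0, hk0⟩ := hE
      refine ⟨v0, fun u v huv => ?_⟩
      have eqf : ∀ x, (∃ k, ((f x : A.verts) : Fin m ⊕ Fin n) = Sum.inl k) → x = v0 := by
        intro x ⟨k, hk⟩
        have hx : ((f x : A.verts) : Fin m ⊕ Fin n) = ((f v0 : A.verts) : Fin m ⊕ Fin n) :=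
          single _ _ ⟨(f x).2, ⟨k, hk.symm⟩⟩ ⟨(f v0).2, ⟨k0, hk0.symm⟩⟩
        exact f.injective (Subtype.ext hx)
      exact (key u v huv).imp (eqf u) (eqf v)
    · push_neg at hE
      refine ⟨0, fun u v huv => ?_⟩
      rcases key u v huv with ⟨k, hk⟩ | ⟨k, hk⟩
      · exact absurd hk (hE u k)
      · exact absurd hk (hE v k)
  obtain ⟨v0, hc⟩ := hcentral
  exact (hstar m).false (star_of_central H hconn v0 hc).some
end

section
/- Let H be a connected non-star graph, P_n(H) the pyramid of height n, with vertices colored uniformly with c_n = n^{1/(|V(H)|-1)} colors. Then the probability that P_n(H) contains a monochromatic copy of H is at most binomial(|V(H)|-1, 2)/c_n, which tends to 0 as n → ∞. Hence T(H, P_n(H)) → 0 in probability. -/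
open Finset Filter

/-- Probability (in a uniform `c n`-coloring of the pyramid) that some monochromatic
copy of `H` exists. -/
noncomputable def pyrProb {m : ℕ} (H : SimpleGraph (Fin (m + 1))) (c : ℕ → ℕ) (n : ℕ) : ℝ :=
  (Nat.card {f : Fin m ⊕ Fin n → Fin (c n) //
      0 < monoCopyCount H (pyramid H n) f} : ℝ) /
    (c n : ℝ) ^ Fintype.card (Fin m ⊕ Fin n)

lemma pyramid_adj_left {m n : ℕ} {H : SimpleGraph (Fin (m + 1))} {x y : Fin m ⊕ Fin n}
    (h : (pyramid H n).Adj x y) : (∃ u, x = Sum.inl u) ∨ ∃ u, y = Sum.inl u := by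
  obtain ⟨hne, h | h⟩ := h
  · cases x with
    | inl u => exact Or.inl ⟨u, rfl⟩
    | inr u => cases y <;> simp at h
  · cases y with
    | inl u => exact Or.inr ⟨u, rfl⟩
    | inr u => cases x <;> simp at h

lemma walk_adj {V : Type*} {H : SimpleGraph V} {x b : V} (w : H.Walk x b) (hne : x ≠ b)
    (hkey : ∀ p q, H.Adj p q → p = b ∨ q = b) : H.Adj x b := by
  cases w with
  | nil => exact absurd rfl hne
  | cons h w =>
    rcases hkey _ _ h with h1 | h2
    · exact absurd h1 hne
    · exact h2 ▸ h

lemma exists_adj_of_walk {V : Type*} {H : SimpleGraph V} {x y : V} (w : H.Walk x y)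
    (h : x ≠ y) : ∃ p q, H.Adj p q := by
  cases w with
  | nil => exact absurd rfl h
  | cons h _ => exact ⟨_, _, h⟩

lemma base_pair {m n : ℕ} (H : SimpleGraph (Fin (m + 1))) (hconn : H.Connected)
    (hstar : ∀ r : ℕ, IsEmpty (H ≃g starGraph r)) (hm : 1 ≤ m)
    (A : (pyramid H n).Subgraph) (hA : Nonempty (A.coe ≃g H)) :
    ∃ u v : Fin m, u ≠ v ∧ Sum.inl u ∈ A.verts ∧ Sum.inl v ∈ A.verts := by
  by_contra hcon
  push_neg at hcon
  have huniq : ∀ u v : Fin m, Sum.inl u ∈ A.verts → Sum.inl v ∈ A.verts → u = v := by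
    intro u v hu hv
    by_contra hne
    exact (hcon u v hne hu) hv
  obtain ⟨e⟩ := hA
  -- H has an edge
  have hedge : ∃ x y : Fin (m+1), H.Adj x y := by
    have hne : (0 : Fin (m+1)) ≠ Fin.last m := by
      simp only [ne_eq, Fin.ext_iff, Fin.val_zero, Fin.val_last]
      omega
    obtain ⟨w⟩ := hconn.preconnected 0 (Fin.last m)
    exact exists_adj_of_walk w hne
  obtain ⟨x0, y0, hxy0⟩ := hedge
  have hAadj : ∀ x y : Fin (m+1), H.Adj x y → A.coe.Adj (e.symm x) (e.symm y) := by
    intro x y h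
    exact e.symm.map_rel_iff.mpr h
  -- there is a base vertex
  have hbase : ∃ b : Fin m, Sum.inl b ∈ A.verts := by
    have h := (hAadj x0 y0 hxy0).adj_sub
    rcases pyramid_adj_left h with ⟨u, hu⟩ | ⟨u, hu⟩
    · exact ⟨u, hu ▸ (e.symm x0).2⟩
    · exact ⟨u, hu ▸ (e.symm y0).2⟩
  obtain ⟨b, hb⟩ := hbase
  set b' : Fin (m+1) := e ⟨Sum.inl b, hb⟩ with hb'
  have hkey : ∀ p q : Fin (m+1), H.Adj p q → p = b' ∨ q = b' := by
    intro p q h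
    have h' := (hAadj p q h).adj_sub
    have hval : ((e.symm p : A.verts) : Fin m ⊕ Fin n) = Sum.inl b →  p = b' := by
      intro hv
      have : e.symm p = ⟨Sum.inl b, hb⟩ := Subtype.ext hv
      rw [hb', ← this, e.apply_symm_apply]
    have hval2 : ((e.symm q : A.verts) : Fin m ⊕ Fin n) = Sum.inl b →  q = b' := by
      intro hv
      have : e.symm q = ⟨Sum.inl b, hb⟩ := Subtype.ext hv
      rw [hb', ← this, e.apply_symm_apply]
    rcases pyramid_adj_left h' with ⟨u, hu⟩ | ⟨u, hu⟩
    · have := huniq u b (hu ▸ (e.symm p).2) hb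
      exact Or.inl (hval (by rw [hu, this]))
    · have := huniq u b (hu ▸ (e.symm q).2) hb
      exact Or.inr (hval2 (by rw [hu, this]))
  have hadjb : ∀ x : Fin (m+1), x ≠ b' → H.Adj x b' := by
    intro x hx
    obtain ⟨w⟩ := hconn.preconnected x b'
    exact walk_adj w hx hkey
  -- build iso to star graph
  have hiso : H ≃g starGraph m := by
    refine ⟨Equiv.swap b' 0, ?_⟩
    intro u v
    have hswap : ∀ w : Fin (m+1), Equiv.swap b' 0 w = 0 ↔ w = b' := by
      intro w
      constructor
      · intro h
        have := (Equiv.swap b' 0).injective (a₁ := w) (a₂ := b')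
        apply this
        rw [h, Equiv.swap_apply_left]
      · intro h; rw [h, Equiv.swap_apply_left]
    simp only [starGraph, SimpleGraph.fromRel_adj, hswap, ne_eq, EmbeddingLike.apply_eq_iff_eq]
    constructor
    · rintro ⟨hne, h | h⟩
      · exact h ▸ (hadjb v (fun hv => hne (h ▸ hv ▸ rfl))).symm
      · exact h ▸ hadjb u (fun hv => hne (h ▸ hv ▸ rfl))
    · intro h
      exact ⟨h.ne, hkey u v h⟩
  exact (hstar m).false hiso

lemma count_bound {m n cn : ℕ} :
    Nat.card {f : Fin m ⊕ Fin n → Fin cn //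
      ∃ u v : Fin m, u ≠ v ∧ f (Sum.inl u) = f (Sum.inl v)}
      ≤ m.choose 2 * cn ^ (m + n - 1) := by
  classical
  set P : (Fin m ⊕ Fin n → Fin cn) → Prop :=
    fun f => ∃ u v : Fin m, u ≠ v ∧ f (Sum.inl u) = f (Sum.inl v) with hP
  have h1 : Nat.card {f // P f} = (univ.filter P).card := by
    rw [Nat.card_eq_fintype_card, Fintype.card_subtype]
  rw [h1]
  set pairs : Finset (Fin m × Fin m) := univ.filter (fun p => p.1 < p.2) with hpairs
  have hsub : univ.filter P ⊆
      pairs.biUnion (fun p => univ.filter fun f => f (Sum.inl p.1) = f (Sum.inl p.2)) := by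
    intro f hf
    rw [mem_filter] at hf
    obtain ⟨-, u, v, hne, heq⟩ := hf
    rcases hne.lt_or_gt with h | h
    · exact mem_biUnion.2 ⟨(u, v), by simp [hpairs, h], by simp [heq]⟩
    · exact mem_biUnion.2 ⟨(v, u), by simp [hpairs, h], by simp [heq.symm]⟩
  have hone : ∀ p : Fin m × Fin m, p.1 ≠ p.2 →
      (univ.filter fun f : Fin m ⊕ Fin n → Fin cn =>
        f (Sum.inl p.1) = f (Sum.inl p.2)).card ≤ cn ^ (m + n - 1) := by
    intro p hne
    have hcard : Fintype.card {y : Fin m ⊕ Fin n // ¬ y = Sum.inl p.2} = m + n - 1 := by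
      rw [Fintype.card_subtype_compl, Fintype.card_subtype_eq]
      simp
    calc (univ.filter fun f : Fin m ⊕ Fin n → Fin cn =>
        f (Sum.inl p.1) = f (Sum.inl p.2)).card
        ≤ (univ : Finset ({y : Fin m ⊕ Fin n // ¬ y = Sum.inl p.2} → Fin cn)).card := by
          apply card_le_card_of_injOn (fun f y => f y.1) (fun f _ => mem_univ _)
          intro f hf g hg h
          simp only [coe_filter, Set.mem_setOf_eq] at hf hg
          funext y
          by_cases hy : y = Sum.inl p.2
          · have h1 : f (Sum.inl p.1) = g (Sum.inl p.1) :=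
              congrFun h ⟨Sum.inl p.1, by simp [hne]⟩
            rw [hy, ← hf.2, ← hg.2, h1]
          · exact congrFun h ⟨y, hy⟩
      _ = cn ^ (m + n - 1) := by rw [card_univ, Fintype.card_fun, Fintype.card_fin, hcard]
  have hpc : pairs.card ≤ m.choose 2 := by
    have := card_le_card_of_injOn (s := pairs) (t := powersetCard 2 univ)
      (fun p : Fin m × Fin m => ({p.1, p.2} : Finset (Fin m))) ?_ ?_
    · simpa [card_powersetCard] using this
    · intro p hp
      simp only [hpairs, coe_filter, Set.mem_setOf_eq] at hp
      rw [mem_coe, mem_powersetCard_univ]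
      dsimp only
      rw [card_pair hp.2.ne]
    · rintro ⟨a, b⟩ hp ⟨c, d⟩ hq h
      simp only [hpairs, coe_filter, Set.mem_setOf_eq] at hp hq
      dsimp only at h
      have hab : a < b := hp.2
      have hcd : c < d := hq.2
      have h1 : a ∈ ({c, d} : Finset (Fin m)) := by rw [← h]; simp
      have h3 : c ∈ ({a, b} : Finset (Fin m)) := by rw [h]; simp
      simp only [mem_insert, mem_singleton] at h1 h3
      rcases h1 with rfl | rfl
      · have h2 : b ∈ ({a, d} : Finset (Fin m)) := by rw [← h]; simp
        simp only [mem_insert, mem_singleton] at h2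
        rcases h2 with rfl | rfl
        · exact absurd hab (lt_irrefl _)
        · rfl
      · rcases h3 with rfl | rfl
        · exact absurd hcd (lt_irrefl _)
        · exact absurd (hab.trans hcd) (lt_irrefl _)
  calc (univ.filter P).card
      ≤ ∑ p ∈ pairs, (univ.filter fun f : Fin m ⊕ Fin n → Fin cn =>
          f (Sum.inl p.1) = f (Sum.inl p.2)).card :=
        le_trans (card_le_card hsub) (card_biUnion_le)
    _ ≤ ∑ _p ∈ pairs, cn ^ (m + n - 1) := by
        apply Finset.sum_le_sum
        intro p hp
        rw [hpairs, mem_filter] at hp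
        exact hone p hp.2.ne
    _ = pairs.card * cn ^ (m + n - 1) := by rw [Finset.sum_const, smul_eq_mul]
    _ ≤ m.choose 2 * cn ^ (m + n - 1) := Nat.mul_le_mul_right _ hpc

/-- For a connected non-star `H` and the pyramid `P_n(H)` colored uniformly with
`c_n = ⌈n^{1/(|V(H)|-1)}⌉` colors, the probability that `P_n(H)` contains a monochromatic copy
of `H` is at most `C(|V(H)|-1, 2)/c_n`, which tends to `0`; hence `T(H,P_n(H)) → 0` in
probability. -/
theorem stmt11 {m : ℕ} (H : SimpleGraph (Fin (m + 1))) (hconn : H.Connected)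
    (hstar : ∀ r : ℕ, IsEmpty (H ≃g starGraph r)) (c : ℕ → ℕ)
    (hc : ∀ n, c n = ⌈(n : ℝ) ^ (1 / (m : ℝ))⌉₊) :
    (∀ n : ℕ, pyrProb H c n ≤ (m.choose 2 : ℝ) / (c n : ℝ)) ∧
    Tendsto (fun n => (m.choose 2 : ℝ) / (c n : ℝ)) atTop (nhds 0) ∧
    Tendsto (fun n => pyrProb H c n) atTop (nhds 0) := by
  have hm : 1 ≤ m := by
    by_contra h
    have hm0 : m = 0 := by omega
    subst hm0
    refine (hstar 0).false ⟨Equiv.refl _, ?_⟩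
    intro a b
    have hab : a = b := by omega
    subst hab
    simp [starGraph]
  have hbound : ∀ n, pyrProb H c n ≤ (m.choose 2 : ℝ) / (c n : ℝ) := by
    intro n
    have himp : ∀ f : Fin m ⊕ Fin n → Fin (c n), 0 < monoCopyCount H (pyramid H n) f →
        ∃ u v : Fin m, u ≠ v ∧ f (Sum.inl u) = f (Sum.inl v) := by
      intro f hf
      rw [monoCopyCount, Nat.card_pos_iff] at hf
      obtain ⟨⟨⟨A, hiso, hmono⟩⟩, -⟩ := hf
      obtain ⟨u, v, huv, hu, hv⟩ := base_pair H hconn hstar hm A hiso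
      exact ⟨u, v, huv, hmono _ hu _ hv⟩
    have hNat : Nat.card {f : Fin m ⊕ Fin n → Fin (c n) //
        0 < monoCopyCount H (pyramid H n) f} ≤ m.choose 2 * (c n) ^ (m + n - 1) :=
      le_trans (Nat.card_le_card_of_injective
        (fun x => ⟨x.1, himp x.1 x.2⟩)
        (fun x y h => by cases x; cases y; simpa using h)) count_bound
    by_cases hcz : c n = 0
    · have hE : IsEmpty (Fin m ⊕ Fin n → Fin (c n)) := by
        rw [hcz]
        exact ⟨fun f => (f (Sum.inl ⟨0, hm⟩)).elim0⟩
      have : Nat.card {f : Fin m ⊕ Fin n → Fin (c n) //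
          0 < monoCopyCount H (pyramid H n) f} = 0 := by
        rw [Nat.card_eq_zero]
        exact Or.inl ⟨fun x => hE.false x.1⟩
      rw [pyrProb, this, hcz]
      simp
    · have hc0 : (0 : ℝ) < (c n : ℝ) := by
        exact_mod_cast Nat.pos_of_ne_zero hcz
      rw [pyrProb]
      have hcardV : Fintype.card (Fin m ⊕ Fin n) = m + n := by simp
      rw [hcardV]
      have hpow : (c n : ℝ) ^ (m + n) = (c n : ℝ) ^ (m + n - 1) * (c n : ℝ) := by
        rw [← pow_succ]
        congr 1
        omega
      rw [div_le_div_iff₀ (by positivity) hc0]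
      have key : (Nat.card {f : Fin m ⊕ Fin n → Fin (c n) //
          0 < monoCopyCount H (pyramid H n) f} : ℝ) ≤
          (m.choose 2 : ℝ) * (c n : ℝ) ^ (m + n - 1) := by
        exact_mod_cast hNat
      calc (Nat.card {f : Fin m ⊕ Fin n → Fin (c n) //
          0 < monoCopyCount H (pyramid H n) f} : ℝ) * (c n : ℝ)
          ≤ ((m.choose 2 : ℝ) * (c n : ℝ) ^ (m + n - 1)) * (c n : ℝ) :=
            mul_le_mul_of_nonneg_right key hc0.le
        _ = (m.choose 2 : ℝ) * (c n : ℝ) ^ (m + n) := by rw [hpow]; ring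
  have hct : Tendsto (fun n => (c n : ℝ)) atTop atTop := by
    have hmpos : (0 : ℝ) < 1 / (m : ℝ) := by
      have : (0 : ℝ) < (m : ℝ) := by exact_mod_cast hm
      positivity
    refine tendsto_atTop_mono (fun n => ?_)
      ((tendsto_rpow_atTop hmpos).comp tendsto_natCast_atTop_atTop)
    rw [hc n]
    exact Nat.le_ceil _
  have h2 : Tendsto (fun n => (m.choose 2 : ℝ) / (c n : ℝ)) atTop (nhds 0) :=
    tendsto_const_nhds.div_atTop hct
  refine ⟨hbound, h2, squeeze_zero (fun n => ?_) hbound h2⟩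
  exact div_nonneg (Nat.cast_nonneg _) (by positivity)
end
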